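/- arXiv:2012.10946 — 3 statements merged into one kernel-verified Lean document; each statement's English description precedes it below -/
import Mathlib

section
/- Let n ≥ 2 and let G_D ≤ O(ℝⁿ) be the group of even signed permutations: maps g of the form (g x)ᵢ = εᵢ x_{σ⁻¹(i)} with σ ∈ Sₙ, ε ∈ {−1,1}ⁿ and ∏_{i=1}^n εᵢ = 1. Let λ, y ∈ ℝⁿ lie in the closed Weyl chamber of type Dₙ: λ₁ ≥ λ₂ ≥ … ≥ λ_{n−1} ≥ |λₙ| and y₁ ≥ y₂ ≥ … ≥ y_{n−1} ≥ |yₙ|. Then for every g ∈ G_D, ⟨λ, g y⟩ = ⟨λ, y⟩ if and only if there exist g₁, g₂ ∈ G_D with g₁ λ = λ, g₂ y = y and g = g₁ ∘ g₂. (This is the Killing-max property for the root system Dₙ.) -/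
open scoped BigOperators
open Finset

namespace Stmt15Aux

variable {n : ℕ}

/-- prefix finset of `Fin n` -/
def pre (n K : ℕ) : Finset (Fin n) := univ.filter (fun i => (i : ℕ) < K)

lemma mem_pre {K : ℕ} {i : Fin n} : i ∈ pre n K ↔ (i : ℕ) < K := by
  simp [pre]

lemma pre_zero : pre n 0 = ∅ := by
  ext i; simp [mem_pre]

lemma card_pre {K : ℕ} (hK : K ≤ n) : (pre n K).card = K := by
  have himg : (pre n K).image Fin.val = Finset.range K := by
    ext j
    simp only [Finset.mem_image, Finset.mem_range, mem_pre]
    constructor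
    · rintro ⟨i, hi, rfl⟩; exact hi
    · intro hj; exact ⟨⟨j, lt_of_lt_of_le hj hK⟩, hj, rfl⟩
  calc (pre n K).card = ((pre n K).image Fin.val).card :=
        (Finset.card_image_of_injective _ Fin.val_injective).symm
    _ = K := by rw [himg, Finset.card_range]

lemma dc_mem_iff (S : Finset (Fin n)) (hdc : ∀ i j : Fin n, i ≤ j → j ∈ S → i ∈ S) (i : Fin n) :
    i ∈ S ↔ (i : ℕ) < S.card := by
  constructor
  · intro hi
    have h1 : Finset.Iic i ⊆ S := fun j hj => hdc j i (Finset.mem_Iic.1 hj) hi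
    have := Finset.card_le_card h1
    rw [Fin.card_Iic] at this; omega
  · intro hi
    by_contra hni
    have h1 : S ⊆ Finset.Iio i := by
      intro j hj
      rw [Finset.mem_Iio]
      by_contra hji
      exact hni (hdc i j (le_of_not_gt hji) hj)
    have := Finset.card_le_card h1
    rw [Fin.card_Iio] at this; omega

lemma abs_le_of_dom (hn : 2 ≤ n) (y : Fin n → ℝ)
    (hychain : ∀ i j : Fin n, i ≤ j → (j : ℕ) < n - 1 → y j ≤ y i)
    (hylast : ∀ i : Fin n, (i : ℕ) < n - 1 → |y ⟨n - 1, Nat.sub_lt (by omega) Nat.one_pos⟩| ≤ y i)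
    (i j : Fin n) (hij : i ≤ j) (hi : (i : ℕ) < n - 1) : |y j| ≤ y i := by
  by_cases hj : (j : ℕ) < n - 1
  · have h0 : 0 ≤ y j := le_trans (abs_nonneg _) (hylast j hj)
    rw [abs_of_nonneg h0]; exact hychain i j hij hj
  · have hj' : j = ⟨n - 1, Nat.sub_lt (by omega) Nat.one_pos⟩ := by
      apply Fin.ext; simp only []
      have := j.isLt; omega
    rw [hj']; exact hylast i hi

lemma select (hn : 2 ≤ n) (y : Fin n → ℝ)
    (hychain : ∀ i j : Fin n, i ≤ j → (j : ℕ) < n - 1 → y j ≤ y i)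
    (hylast : ∀ i : Fin n, (i : ℕ) < n - 1 → |y ⟨n - 1, Nat.sub_lt (by omega) Nat.one_pos⟩| ≤ y i) :
    ∀ K : ℕ, K ≤ n - 1 → ∀ J : Finset (Fin n), J.card = K →
      (∑ j ∈ J, |y j| ≤ ∑ i ∈ pre n K, y i) ∧
      ((∑ j ∈ J, |y j|) = (∑ i ∈ pre n K, y i) →
        J.val.map (fun j => |y j|) = (pre n K).val.map y) := by
  intro K
  induction K with
  | zero =>
    intro _ J hJ
    have hJ0 : J = ∅ := Finset.card_eq_zero.1 hJ
    subst hJ0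
    rw [pre_zero]
    simp
  | succ K ih =>
    intro hK J hJ
    have hJne : J.Nonempty := Finset.card_pos.1 (by omega)
    set jm := J.max' hJne with hjmdef
    have hjm : jm ∈ J := J.max'_mem hJne
    have hsub : J ⊆ Finset.Iic jm := fun j hj => Finset.mem_Iic.2 (J.le_max' j hj)
    have hcard : K + 1 ≤ (jm : ℕ) + 1 := by
      have := Finset.card_le_card hsub
      rw [Fin.card_Iic] at this; omega
    have hKlt : K < n := by omega
    have hKfin : (⟨K, hKlt⟩ : Fin n) ≤ jm := by
      rw [Fin.le_def]; simpa using (by omega : K ≤ (jm : ℕ))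
    have habs : |y jm| ≤ y ⟨K, hKlt⟩ :=
      abs_le_of_dom hn y hychain hylast ⟨K, hKlt⟩ jm hKfin (by simpa using (by omega : K < n - 1))
    have hJ' : (J.erase jm).card = K := by
      rw [Finset.card_erase_of_mem hjm, hJ]; omega
    obtain ⟨ih1, ih2⟩ := ih (by omega) (J.erase jm) hJ'
    have hKmem : (⟨K, hKlt⟩ : Fin n) ∉ pre n K := by simp [mem_pre]
    have hpre : pre n (K + 1) = insert ⟨K, hKlt⟩ (pre n K) := by
      ext i
      simp only [mem_pre, Finset.mem_insert, Fin.ext_iff]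
      omega
    have hsumJ : ∑ j ∈ J, |y j| = |y jm| + ∑ j ∈ J.erase jm, |y j| :=
      (Finset.add_sum_erase _ _ hjm).symm
    have hsumP : ∑ i ∈ pre n (K + 1), y i = y ⟨K, hKlt⟩ + ∑ i ∈ pre n K, y i := by
      rw [hpre, Finset.sum_insert hKmem]
    constructor
    · rw [hsumJ, hsumP]; exact add_le_add habs ih1
    · intro heq
      rw [hsumJ, hsumP] at heq
      have e1 : |y jm| = y ⟨K, hKlt⟩ := by linarith
      have e2 : (∑ j ∈ J.erase jm, |y j|) = ∑ i ∈ pre n K, y i := by linarith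
      have hm1 : J.val = jm ::ₘ (J.erase jm).val := by
        rw [Finset.erase_val, Multiset.cons_erase hjm]
      have hm2 : (pre n (K + 1)).val = (⟨K, hKlt⟩ : Fin n) ::ₘ (pre n K).val := by
        rw [hpre, Finset.insert_val_of_notMem hKmem]
      rw [hm1, hm2, Multiset.map_cons, Multiset.map_cons, e1, ih2 e2]

lemma mapPerm {α : Type*} (f : Fin n → α) (ρ : Equiv.Perm (Fin n)) :
    (univ : Finset (Fin n)).val.map (fun i => f (ρ i)) = (univ : Finset (Fin n)).val.map f := by
  have h1 : (univ : Finset (Fin n)).val.map ⇑ρ = (univ : Finset (Fin n)).val := by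
    conv_rhs => rw [← Finset.map_univ_equiv ρ]
    rfl
  calc (univ : Finset (Fin n)).val.map (fun i => f (ρ i))
      = ((univ : Finset (Fin n)).val.map ⇑ρ).map f := by
        rw [Multiset.map_map]; rfl
    _ = (univ : Finset (Fin n)).val.map f := by rw [h1]

lemma full (hn : 2 ≤ n) (y z : Fin n → ℝ) (σ : Equiv.Perm (Fin n)) (ε : Fin n → ℝ)
    (hε1 : ∀ i, ε i = 1 ∨ ε i = -1) (hεp : (∏ i, ε i) = 1)
    (hz : ∀ i, z i = ε i * y (σ⁻¹ i))
    (hychain : ∀ i j : Fin n, i ≤ j → (j : ℕ) < n - 1 → y j ≤ y i)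
    (hylast : ∀ i : Fin n, (i : ℕ) < n - 1 → |y ⟨n - 1, Nat.sub_lt (by omega) Nat.one_pos⟩| ≤ y i) :
    ((∑ i, z i) ≤ ∑ i, y i) ∧
      ((∑ i, z i) = (∑ i, y i) →
        (univ : Finset (Fin n)).val.map z = (univ : Finset (Fin n)).val.map y) := by
  classical
  set L : Fin n := ⟨n - 1, Nat.sub_lt (by omega) Nat.one_pos⟩ with hLdef
  have hw : ∀ j, z (σ j) = ε (σ j) * y j := by
    intro j; rw [hz]; simp
  have hsz : (∑ i, z i) = ∑ j, ε (σ j) * y j := by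
    rw [← Equiv.sum_comp σ z]
    exact Finset.sum_congr rfl (fun j _ => hw j)
  have hLval : (L : ℕ) = n - 1 := rfl
  set F : Finset (Fin n) := univ.filter (fun j => ε (σ j) = -1) with hFdef
  have hFone : ∀ j, j ∉ F → ε (σ j) = 1 := by
    intro j hj
    rcases hε1 (σ j) with h | h
    · exact h
    · exact absurd (show j ∈ F by rw [hFdef, Finset.mem_filter]; exact ⟨Finset.mem_univ _, h⟩) hj
  have hFmem : ∀ j ∈ F, ε (σ j) = -1 := fun j hj => (Finset.mem_filter.1 hj).2
  have hdiff : (∑ i, y i) - (∑ i, z i) = 2 * ∑ j ∈ F, y j := by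
    rw [hsz, ← Finset.sum_sub_distrib]
    rw [← Finset.sum_filter_add_sum_filter_not univ (fun j => ε (σ j) = -1)
      (fun j => y j - ε (σ j) * y j)]
    have h1 : ∑ j ∈ univ.filter (fun j => ¬ ε (σ j) = -1), (y j - ε (σ j) * y j) = 0 := by
      apply Finset.sum_eq_zero
      intro j hj
      have : ε (σ j) = 1 := hFone j (by simp only [hFdef, Finset.mem_filter] at *; tauto)
      rw [this]; ring
    have h2 : ∑ j ∈ F, (y j - ε (σ j) * y j) = ∑ j ∈ F, 2 * y j := by
      apply Finset.sum_congr rfl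
      intro j hj
      rw [hFmem j hj]; ring
    rw [h1, h2, add_zero, Finset.mul_sum]
  have hFeven : Even F.card := by
    have hp : (∏ j, ε (σ j)) = 1 := by rw [Equiv.prod_comp σ ε]; exact hεp
    rw [← Finset.prod_filter_mul_prod_filter_not univ (fun j => ε (σ j) = -1)
      (fun j => ε (σ j))] at hp
    have h1 : (∏ j ∈ F, ε (σ j)) = (-1 : ℝ) ^ F.card := by
      rw [Finset.prod_congr rfl hFmem, Finset.prod_const]
    have h2 : (∏ j ∈ univ.filter (fun j => ¬ ε (σ j) = -1), ε (σ j)) = 1 := by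
      apply Finset.prod_eq_one
      intro j hj
      exact hFone j (by simp only [hFdef, Finset.mem_filter] at *; tauto)
    rw [h1, h2, mul_one] at hp
    exact (neg_one_pow_eq_one_iff_even (by norm_num)).1 hp
  have hynn : ∀ j : Fin n, j ≠ L → 0 ≤ y j := by
    intro j hj
    have hjlt : (j : ℕ) < n - 1 := by
      have := j.isLt
      rcases Nat.lt_or_ge (j : ℕ) (n - 1) with h | h
      · exact h
      · exact absurd (Fin.ext (by omega : (j : ℕ) = (L : ℕ))) hj
    exact le_trans (abs_nonneg _) (hylast j hjlt)
  have hyabs : ∀ j : Fin n, j ≠ L → |y L| ≤ y j := by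
    intro j hj
    have hjlt : (j : ℕ) < n - 1 := by
      have := j.isLt
      rcases Nat.lt_or_ge (j : ℕ) (n - 1) with h | h
      · exact h
      · exact absurd (Fin.ext (by omega : (j : ℕ) = (L : ℕ))) hj
    exact hylast j hjlt
  have hFsum : 0 ≤ ∑ j ∈ F, y j := by
    by_cases hL : L ∈ F
    · have hcard2 : 2 ≤ F.card := by
        rcases hFeven with ⟨c, hc⟩
        have : 0 < F.card := Finset.card_pos.2 ⟨L, hL⟩
        omega
      have hne : (F.erase L).Nonempty := by
        rw [← Finset.card_pos, Finset.card_erase_of_mem hL]; omega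
      obtain ⟨j₀, hj₀⟩ := hne
      have hj₀L : j₀ ≠ L := Finset.ne_of_mem_erase hj₀
      have h1 : |y L| ≤ ∑ j ∈ F.erase L, y j := by
        refine le_trans (hyabs j₀ hj₀L) (Finset.single_le_sum ?_ hj₀)
        intro j hj
        exact hynn j (Finset.ne_of_mem_erase hj)
      have h2 : ∑ j ∈ F, y j = y L + ∑ j ∈ F.erase L, y j :=
        (Finset.add_sum_erase _ _ hL).symm
      have := neg_abs_le (y L)
      rw [h2]; linarith
    · apply Finset.sum_nonneg
      intro j hj
      exact hynn j (fun h => hL (h ▸ hj))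
  constructor
  · linarith
  · intro heq
    have hF0 : ∑ j ∈ F, y j = 0 := by linarith
    have hρ : ∃ ρ : Equiv.Perm (Fin n), ∀ j, ε (σ j) * y j = y (ρ j) := by
      by_cases hL : L ∈ F
      · set s := F.erase L with hsdef
        have hcard2 : 2 ≤ F.card := by
          rcases hFeven with ⟨c, hc⟩
          have : 0 < F.card := Finset.card_pos.2 ⟨L, hL⟩
          omega
        have hne : s.Nonempty := by
          rw [hsdef, ← Finset.card_pos, Finset.card_erase_of_mem hL]; omega
        have hssum : ∑ j ∈ s, y j = - y L := by
          have h2 : ∑ j ∈ F, y j = y L + ∑ j ∈ s, y j := (Finset.add_sum_erase _ _ hL).symm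
          rw [h2] at hF0; linarith
        by_cases hsc : s.card = 1
        · obtain ⟨j₀, hj₀⟩ := Finset.card_eq_one.1 hsc
          have hj₀s : j₀ ∈ s := by rw [hj₀]; exact Finset.mem_singleton_self _
          have hj₀L : j₀ ≠ L := Finset.ne_of_mem_erase hj₀s
          have hy₀ : y j₀ = - y L := by
            rw [hj₀, Finset.sum_singleton] at hssum; exact hssum
          have hFeq : F = insert L s := by rw [hsdef, Finset.insert_erase hL]
          refine ⟨Equiv.swap j₀ L, ?_⟩
          intro j
          by_cases hjF : j ∈ F
          · have hjF' := hjF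
            rw [hFeq, hj₀] at hjF'
            simp only [Finset.mem_insert, Finset.mem_singleton] at hjF'
            rcases hjF' with rfl | rfl
            · rw [hFmem _ hjF, Equiv.swap_apply_right, hy₀]; ring
            · rw [hFmem _ hjF, Equiv.swap_apply_left, hy₀]; ring
          · rw [hFone j hjF, Equiv.swap_apply_of_ne_of_ne, one_mul]
            · intro h; subst h
              exact hjF (by rw [hFeq, hj₀]; exact Finset.mem_insert_of_mem (Finset.mem_singleton_self _))
            · intro h; subst h; exact hjF hL
        · have hsc2 : 2 ≤ s.card := by
            have : 0 < s.card := Finset.card_pos.2 hne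
            omega
          obtain ⟨j₀, hj₀, j₁, hj₁, hj01⟩ := Finset.one_lt_card.1 hsc2
          have hge : 2 * |y L| ≤ ∑ j ∈ s, y j := by
            have h1 : ∑ j ∈ ({j₀, j₁} : Finset (Fin n)), y j ≤ ∑ j ∈ s, y j := by
              apply Finset.sum_le_sum_of_subset_of_nonneg
              · intro j hj
                simp only [Finset.mem_insert, Finset.mem_singleton] at hj
                rcases hj with rfl | rfl <;> assumption
              · intro j hj _
                exact hynn j (Finset.ne_of_mem_erase hj)
            have h2 : ∑ j ∈ ({j₀, j₁} : Finset (Fin n)), y j = y j₀ + y j₁ := by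
              rw [Finset.sum_insert (by simpa using hj01), Finset.sum_singleton]
            have h3 : |y L| ≤ y j₀ := hyabs j₀ (Finset.ne_of_mem_erase hj₀)
            have h4 : |y L| ≤ y j₁ := hyabs j₁ (Finset.ne_of_mem_erase hj₁)
            linarith
          have hL0 : y L = 0 := by
            have h5 := neg_abs_le (y L)
            have h6 : |y L| ≤ 0 := by
              rw [hssum] at hge
              have := abs_nonneg (y L)
              -- 2|yL| ≤ -yL ≤ |yL|
              have h7 : - y L ≤ |y L| := neg_le_abs _
              linarith
            have := abs_nonneg (y L)
            have : |y L| = 0 := le_antisymm h6 this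
            exact abs_eq_zero.1 this
          have hall : ∀ j ∈ F, y j = 0 := by
            have hs0 : ∑ j ∈ s, y j = 0 := by rw [hssum, hL0]; ring
            have hall_s : ∀ j ∈ s, y j = 0 :=
              (Finset.sum_eq_zero_iff_of_nonneg
                (fun j hj => hynn j (Finset.ne_of_mem_erase hj))).1 hs0
            intro j hj
            by_cases hjL : j = L
            · rw [hjL]; exact hL0
            · exact hall_s j (Finset.mem_erase.2 ⟨hjL, hj⟩)
          refine ⟨1, ?_⟩
          intro j
          by_cases hjF : j ∈ F
          · have h0 := hall j hjF; simp [Equiv.Perm.one_apply, h0]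
          · rw [hFone j hjF]; simp
      · have hall : ∀ j ∈ F, y j = 0 :=
          (Finset.sum_eq_zero_iff_of_nonneg
            (fun j hj => hynn j (fun h => hL (h ▸ hj)))).1 hF0
        refine ⟨1, ?_⟩
        intro j
        by_cases hjF : j ∈ F
        · have h0 := hall j hjF; simp [Equiv.Perm.one_apply, h0]
        · rw [hFone j hjF]; simp
    obtain ⟨ρ, hρ⟩ := hρ
    calc (univ : Finset (Fin n)).val.map z
        = (univ : Finset (Fin n)).val.map (fun j => z (σ j)) := (mapPerm z σ).symm
      _ = (univ : Finset (Fin n)).val.map (fun j => ε (σ j) * y j) := by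
          apply Multiset.map_congr rfl
          intro x _; exact hw x
      _ = (univ : Finset (Fin n)).val.map (fun j => y (ρ j)) := by
          apply Multiset.map_congr rfl
          intro x _; exact hρ x
      _ = (univ : Finset (Fin n)).val.map y := mapPerm y ρ

lemma valeq (hn : 2 ≤ n) (y z : Fin n → ℝ) (σ : Equiv.Perm (Fin n)) (ε : Fin n → ℝ)
    (hε1 : ∀ i, ε i = 1 ∨ ε i = -1)
    (hz : ∀ i, z i = ε i * y (σ⁻¹ i))
    (hychain : ∀ i j : Fin n, i ≤ j → (j : ℕ) < n - 1 → y j ≤ y i)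
    (hylast : ∀ i : Fin n, (i : ℕ) < n - 1 → |y ⟨n - 1, Nat.sub_lt (by omega) Nat.one_pos⟩| ≤ y i)
    (K : ℕ) (hK : K ≤ n - 1) :
    ((∑ i ∈ pre n K, z i) ≤ ∑ i ∈ pre n K, y i) ∧
      ((∑ i ∈ pre n K, z i) = (∑ i ∈ pre n K, y i) →
        (pre n K).val.map z = (pre n K).val.map y) := by
  classical
  set J : Finset (Fin n) := (pre n K).image (⇑σ⁻¹) with hJdef
  have hinj : Function.Injective (⇑σ⁻¹) := Equiv.injective _
  have hJcard : J.card = K := by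
    rw [hJdef, Finset.card_image_of_injective _ hinj, card_pre (by omega)]
  have h1 : ∀ i : Fin n, z i ≤ |y (σ⁻¹ i)| := by
    intro i
    rw [hz i]
    rcases hε1 i with h | h
    · rw [h, one_mul]; exact le_abs_self _
    · rw [h]; rw [neg_one_mul]; exact neg_le_abs _
  have h2 : (∑ i ∈ pre n K, |y (σ⁻¹ i)|) = ∑ j ∈ J, |y j| := by
    rw [hJdef, Finset.sum_image (fun a _ b _ h => hinj h)]
  obtain ⟨hsel1, hsel2⟩ := select hn y hychain hylast K hK J hJcard
  have hch1 : (∑ i ∈ pre n K, z i) ≤ ∑ i ∈ pre n K, |y (σ⁻¹ i)| :=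
    Finset.sum_le_sum (fun i _ => h1 i)
  constructor
  · calc (∑ i ∈ pre n K, z i) ≤ ∑ i ∈ pre n K, |y (σ⁻¹ i)| := hch1
      _ = ∑ j ∈ J, |y j| := h2
      _ ≤ ∑ i ∈ pre n K, y i := hsel1
  · intro heq
    have eqA : (∑ i ∈ pre n K, z i) = ∑ i ∈ pre n K, |y (σ⁻¹ i)| := by
      rw [h2] at hch1 ⊢
      linarith
    have eqB : (∑ j ∈ J, |y j|) = ∑ i ∈ pre n K, y i := by
      rw [← h2, ← eqA]; exact heq
    have hpt : ∀ i ∈ pre n K, z i = |y (σ⁻¹ i)| :=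
      (Finset.sum_eq_sum_iff_of_le (fun i _ => h1 i)).1 eqA
    have hJval : J.val = (pre n K).val.map (⇑σ⁻¹) := by
      rw [hJdef, Finset.image_val, Multiset.dedup_eq_self.2]
      exact Multiset.Nodup.map hinj (pre n K).nodup
    calc (pre n K).val.map z
        = (pre n K).val.map (fun i => |y (σ⁻¹ i)|) :=
          Multiset.map_congr rfl (fun i hi => hpt i hi)
      _ = J.val.map (fun j => |y j|) := by
          rw [hJval, Multiset.map_map]; rfl
      _ = (pre n K).val.map y := hsel2 eqB

/-- `lam` extended to `ℕ` by zero. -/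
def lamN (lam : Fin n → ℝ) : ℕ → ℝ := fun k => if h : k < n then lam ⟨k, h⟩ else 0

lemma pre_n_eq_univ : pre n n = univ := by
  ext i; simp [mem_pre, i.isLt]

lemma boundary (hn : 2 ≤ n) (lam y z : Fin n → ℝ) (σ : Equiv.Perm (Fin n)) (ε : Fin n → ℝ)
    (hε1 : ∀ i, ε i = 1 ∨ ε i = -1) (hεp : (∏ i, ε i) = 1)
    (hz : ∀ i, z i = ε i * y (σ⁻¹ i))
    (hmono : ∀ i j : Fin n, i ≤ j → lam j ≤ lam i) (hnn : ∀ i, 0 ≤ lam i)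
    (hychain : ∀ i j : Fin n, i ≤ j → (j : ℕ) < n - 1 → y j ≤ y i)
    (hylast : ∀ i : Fin n, (i : ℕ) < n - 1 → |y ⟨n - 1, Nat.sub_lt (by omega) Nat.one_pos⟩| ≤ y i)
    (heq : (∑ i, lam i * z i) = ∑ i, lam i * y i) :
    ∀ K : ℕ, 0 < K → K ≤ n → lamN lam K < lamN lam (K - 1) →
      (pre n K).val.map z = (pre n K).val.map y := by
  classical
  set d : Fin n → ℝ := fun i => y i - z i with hddef
  set DD : ℕ → ℝ := fun K => ∑ i ∈ pre n K, d i with hDDdef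
  set C : ℕ → ℝ := fun k => lamN lam k - lamN lam (k + 1) with hCdef
  have hLnn : ∀ k, 0 ≤ lamN lam k := by
    intro k
    rw [lamN]
    split
    · exact hnn _
    · exact le_refl 0
  have hLmono : ∀ k, lamN lam (k + 1) ≤ lamN lam k := by
    intro k
    by_cases h1 : k + 1 < n
    · have h0 : k < n := by omega
      simp only [lamN, dif_pos h1, dif_pos h0]
      exact hmono ⟨k, h0⟩ ⟨k + 1, h1⟩ (by simp [Fin.le_def])
    · by_cases h0 : k < n
      · simp only [lamN, dif_neg h1, dif_pos h0]
        exact hnn _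
      · simp only [lamN, dif_neg h1, dif_neg h0]
        exact le_refl 0
  have hCnn : ∀ k, 0 ≤ C k := fun k => sub_nonneg.2 (hLmono k)
  have hDDnn : ∀ K : ℕ, K ≤ n → 0 ≤ DD K := by
    intro K hKn
    rcases Nat.lt_or_ge K n with h | h
    · have h1 := (valeq hn y z σ ε hε1 hz hychain hylast K (by omega)).1
      have h2 : DD K = (∑ i ∈ pre n K, y i) - ∑ i ∈ pre n K, z i := by
        simp only [hDDdef, hddef, Finset.sum_sub_distrib]
      rw [h2]; linarith
    · have hKn' : K = n := le_antisymm hKn h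
      have h1 := (full hn y z σ ε hε1 hεp hz hychain hylast).1
      have h2 : DD K = (∑ i ∈ pre n K, y i) - ∑ i ∈ pre n K, z i := by
        simp only [hDDdef, hddef, Finset.sum_sub_distrib]
      rw [h2, hKn', pre_n_eq_univ]
      linarith
  have htel : ∀ i : Fin n, (∑ k ∈ Finset.Ico (i : ℕ) n, C k) = lam i := by
    intro i
    have h1 : (∑ k ∈ Finset.Ico (i : ℕ) n, C k)
        = (∑ k ∈ Finset.range n, C k) - ∑ k ∈ Finset.range (i : ℕ), C k :=
      Finset.sum_Ico_eq_sub _ (le_of_lt i.isLt)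
    have h2 : ∀ m : ℕ, (∑ k ∈ Finset.range m, C k) = lamN lam 0 - lamN lam m := by
      intro m
      rw [hCdef]
      exact Finset.sum_range_sub' (lamN lam) m
    have h3 : lamN lam n = 0 := by simp [lamN]
    have h4 : lamN lam (i : ℕ) = lam i := by simp [lamN, i.isLt]
    rw [h1, h2, h2, h3, h4]; ring
  have habel : (∑ k ∈ Finset.range n, C k * DD (k + 1)) = ∑ i : Fin n, lam i * d i := by
    have hstep : ∀ k : ℕ, C k * DD (k + 1) = ∑ i : Fin n, (if (i : ℕ) < k + 1 then C k * d i else 0) := by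
      intro k
      have : DD (k + 1) = ∑ i ∈ pre n (k + 1), d i := by rw [hDDdef]
      rw [this, Finset.mul_sum, pre, Finset.sum_filter]
    rw [Finset.sum_congr rfl (fun k _ => hstep k), Finset.sum_comm]
    apply Finset.sum_congr rfl
    intro i _
    have hsw : ∀ k : ℕ, (if (i : ℕ) < k + 1 then C k * d i else 0)
        = (if (i : ℕ) ≤ k then C k else 0) * d i := by
      intro k
      by_cases h : (i : ℕ) ≤ k
      · rw [if_pos (by omega), if_pos h]
      · rw [if_neg (by omega), if_neg h, zero_mul]
    rw [Finset.sum_congr rfl (fun k _ => hsw k), ← Finset.sum_mul]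
    have hfil : (Finset.range n).filter (fun k => (i : ℕ) ≤ k) = Finset.Ico (i : ℕ) n := by
      ext k
      simp only [Finset.mem_filter, Finset.mem_range, Finset.mem_Ico]
      tauto
    rw [← Finset.sum_filter, hfil, htel i, mul_comm]
  have hzero : (∑ k ∈ Finset.range n, C k * DD (k + 1)) = 0 := by
    rw [habel]
    have h1 : (∑ i : Fin n, lam i * d i)
        = (∑ i : Fin n, lam i * y i) - ∑ i : Fin n, lam i * z i := by
      simp only [hddef, mul_sub, Finset.sum_sub_distrib]
    rw [h1, heq]; ring
  have hterms : ∀ k ∈ Finset.range n, C k * DD (k + 1) = 0 :=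
    (Finset.sum_eq_zero_iff_of_nonneg
      (fun k hk => mul_nonneg (hCnn k) (hDDnn (k + 1) (Finset.mem_range.1 hk)))).1 hzero
  intro K hK0 hKn hlt
  have hKmem : K - 1 ∈ Finset.range n := Finset.mem_range.2 (by omega)
  have hK1 : K - 1 + 1 = K := by omega
  have hCK : 0 < C (K - 1) := by
    have hc : C (K - 1) = lamN lam (K - 1) - lamN lam (K - 1 + 1) := by rw [hCdef]
    rw [hK1] at hc
    rw [hc]; linarith
  have hDK : DD K = 0 := by
    have h1 := hterms (K - 1) hKmem
    rw [hK1] at h1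
    rcases mul_eq_zero.1 h1 with h | h
    · linarith
    · exact h
  have hsumeq : (∑ i ∈ pre n K, z i) = ∑ i ∈ pre n K, y i := by
    have h2 : DD K = (∑ i ∈ pre n K, y i) - ∑ i ∈ pre n K, z i := by
      simp only [hDDdef, hddef, Finset.sum_sub_distrib]
    rw [h2] at hDK; linarith
  rcases Nat.lt_or_ge K n with h | h
  · exact (valeq hn y z σ ε hε1 hz hychain hylast K (by omega)).2 hsumeq
  · have hKn' : K = n := le_antisymm hKn h
    rw [hKn', pre_n_eq_univ] at hsumeq ⊢
    exact (full hn y z σ ε hε1 hεp hz hychain hylast).2 hsumeq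

lemma blockInd (hn : 2 ≤ n) (lam y z : Fin n → ℝ)
    (hmono : ∀ i j : Fin n, i ≤ j → lam j ≤ lam i) (hnn : ∀ i, 0 ≤ lam i)
    (hval : ∀ K : ℕ, 0 < K → K ≤ n → lamN lam K < lamN lam (K - 1) →
      (pre n K).val.map z = (pre n K).val.map y) :
    ∀ K : ℕ, K ≤ n → (K = 0 ∨ lamN lam K < lamN lam (K - 1)) →
      (pre n K).val.map (fun i => (lam i, z i)) = (pre n K).val.map (fun i => (lam i, y i)) := by
  classical
  intro K
  induction K using Nat.strong_induction_on with
  | _ K ih =>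
  intro hKn hbnd
  rcases Nat.eq_zero_or_pos K with rfl | hK0
  · rw [pre_zero]; rfl
  rcases hbnd with h0 | hbnd
  · omega
  have hK1n : K - 1 < n := by omega
  have hlamK1 : lamN lam (K - 1) = lam ⟨K - 1, hK1n⟩ := by simp [lamN, hK1n]
  have hVK : (pre n K).val.map z = (pre n K).val.map y := hval K hK0 hKn hbnd
  set S : Finset (Fin n) := univ.filter (fun i => lamN lam (K - 1) < lam i) with hSdef
  have hdc : ∀ i j : Fin n, i ≤ j → j ∈ S → i ∈ S := by
    intro i j hij hj
    rw [hSdef, Finset.mem_filter] at hj ⊢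
    exact ⟨Finset.mem_univ _, lt_of_lt_of_le hj.2 (hmono i j hij)⟩
  have hmemS := dc_mem_iff S hdc
  set a := S.card with hadef
  have hsub : S ⊆ pre n (K - 1) := by
    intro i hi
    rw [mem_pre]
    by_contra hik
    push_neg at hik
    have hle : (⟨K - 1, hK1n⟩ : Fin n) ≤ i := by
      rw [Fin.le_def]; exact (by omega : K - 1 ≤ (i : ℕ))
    have hmi := hmono _ i hle
    rw [hSdef, Finset.mem_filter] at hi
    rw [hlamK1] at hi
    linarith [hi.2]
  have haK : a ≤ K - 1 := by
    have := Finset.card_le_card hsub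
    rw [card_pre (by omega : K - 1 ≤ n)] at this
    exact this
  have han : a < n := by omega
  have hbnd_a : a = 0 ∨ lamN lam a < lamN lam (a - 1) := by
    rcases Nat.eq_zero_or_pos a with h | h
    · left; exact h
    right
    have ha1n : a - 1 < n := by omega
    have hmem1 : (⟨a - 1, ha1n⟩ : Fin n) ∈ S :=
      (hmemS _).2 (by exact (by omega : a - 1 < a))
    have hmem2 : lam ⟨a, han⟩ ≤ lamN lam (K - 1) := by
      by_contra hc; push_neg at hc
      have hin : (⟨a, han⟩ : Fin n) ∈ S := by
        rw [hSdef, Finset.mem_filter]; exact ⟨Finset.mem_univ _, hc⟩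
      have h3 : a < a := (hmemS _).1 hin
      omega
    rw [hSdef, Finset.mem_filter] at hmem1
    have e1 : lamN lam (a - 1) = lam ⟨a - 1, ha1n⟩ := by simp [lamN, ha1n]
    have e2 : lamN lam a = lam ⟨a, han⟩ := by simp [lamN, han]
    rw [e1, e2]
    linarith [hmem1.2]
  have hPa := ih a (by omega) (by omega) hbnd_a
  have hVa : (pre n a).val.map z = (pre n a).val.map y := by
    rcases hbnd_a with h | h
    · rw [h, pre_zero]; rfl
    · have ha0 : 0 < a := by
        rcases Nat.eq_zero_or_pos a with h0 | h0
        · rw [h0] at h; simp at h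
        · exact h0
      exact hval a ha0 (by omega) h
  have hconst : ∀ i : Fin n, a ≤ (i : ℕ) → (i : ℕ) < K → lam i = lamN lam (K - 1) := by
    intro i h1 h2
    have hle : lam i ≤ lamN lam (K - 1) := by
      by_contra hc; push_neg at hc
      have hin : i ∈ S := by
        rw [hSdef, Finset.mem_filter]; exact ⟨Finset.mem_univ _, hc⟩
      have := (hmemS i).1 hin
      omega
    have hge : lam ⟨K - 1, hK1n⟩ ≤ lam i := by
      apply hmono
      rw [Fin.le_def]; exact (by omega : (i : ℕ) ≤ K - 1)
    rw [hlamK1]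
    rw [hlamK1] at hle
    linarith
  set mid : Finset (Fin n) := univ.filter (fun i : Fin n => a ≤ (i : ℕ) ∧ (i : ℕ) < K) with hmiddef
  have hdisj : Disjoint (pre n a) mid := by
    rw [Finset.disjoint_left]
    intro i hi hic
    rw [mem_pre] at hi
    rw [hmiddef, Finset.mem_filter] at hic
    omega
  have hsplit : (pre n K).val = (pre n a).val + mid.val := by
    have hdu : pre n K = (pre n a).disjUnion mid hdisj := by
      ext i
      rw [Finset.mem_disjUnion, mem_pre, mem_pre, hmiddef, Finset.mem_filter]
      constructor
      · intro h
        by_cases hia : (i : ℕ) < a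
        · left; exact hia
        · right; exact ⟨Finset.mem_univ _, by omega, h⟩
      · rintro (h | h)
        · omega
        · exact h.2.2
    rw [hdu]; rfl
  have hmidzy : mid.val.map z = mid.val.map y := by
    have h1 := hVK
    rw [hsplit, Multiset.map_add, Multiset.map_add, hVa] at h1
    exact add_left_cancel h1
  have hmidpair : ∀ w : Fin n → ℝ,
      mid.val.map (fun i => (lam i, w i))
        = (mid.val.map w).map (fun v => (lamN lam (K - 1), v)) := by
    intro w
    rw [Multiset.map_map]
    apply Multiset.map_congr rfl
    intro x hx
    have hx' : x ∈ mid := hx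
    rw [hmiddef, Finset.mem_filter] at hx'
    simp only [Function.comp]
    rw [hconst x hx'.2.1 hx'.2.2]
  rw [hsplit, Multiset.map_add, Multiset.map_add, hPa, hmidpair z, hmidpair y, hmidzy]

lemma extract {α β : Type*} [DecidableEq α] [DecidableEq β] :
    ∀ (N : ℕ) (s t : Finset α) (f g : α → β), s.card = N →
      s.val.map f = t.val.map g →
      ∃ π : α → α, Set.BijOn π ↑s ↑t ∧ ∀ i ∈ s, f i = g (π i) := by
  intro N
  induction N with
  | zero =>
    intro s t f g hs hm
    have hs0 : s = ∅ := Finset.card_eq_zero.1 hs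
    subst hs0
    have ht0 : t = ∅ := by
      have h1 : t.val.map g = 0 := by rw [← hm]; simp
      have h2 : t.val = 0 := by
        by_contra hne
        obtain ⟨x, hx⟩ := Multiset.exists_mem_of_ne_zero hne
        exact absurd (Multiset.mem_map_of_mem g hx) (by rw [h1]; simp)
      exact Finset.val_eq_zero.1 h2
    subst ht0
    exact ⟨id, by simp, by simp⟩
  | succ N ih =>
    intro s t f g hs hm
    obtain ⟨a, ha⟩ : s.Nonempty := Finset.card_pos.1 (by omega)
    have hfa : f a ∈ t.val.map g := by
      rw [← hm]; exact Multiset.mem_map_of_mem f ha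
    obtain ⟨b, hbt, hgb⟩ := Multiset.mem_map.1 hfa
    have hbt' : b ∈ t := hbt
    have hsv : s.val = a ::ₘ (s.erase a).val := by
      rw [Finset.erase_val, Multiset.cons_erase ha]
    have htv : t.val = b ::ₘ (t.erase b).val := by
      rw [Finset.erase_val, Multiset.cons_erase hbt]
    have hm' : (s.erase a).val.map f = (t.erase b).val.map g := by
      have h1 := hm
      rw [hsv, htv, Multiset.map_cons, Multiset.map_cons, hgb] at h1
      exact (Multiset.cons_inj_right _).1 h1
    obtain ⟨π', hbij, hπ'⟩ := ih (s.erase a) (t.erase b) f g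
      (by rw [Finset.card_erase_of_mem ha, hs]; omega) hm'
    refine ⟨Function.update π' a b, ?_, ?_⟩
    · have h1 : Set.BijOn (Function.update π' a b) ↑(s.erase a) ↑(t.erase b) := by
        apply Set.BijOn.congr hbij
        intro x hx
        have : x ≠ a := by
          simp only [Finset.coe_erase, Set.mem_diff, Set.mem_singleton_iff] at hx
          exact hx.2
        rw [Function.update_of_ne this]
      have h2 := h1.insert (a := a)
        (by
          rw [Function.update_self]
          simp)
      rw [Function.update_self] at h2
      have e1 : (insert a (↑(s.erase a) : Set α)) = (↑s : Set α) := by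
        rw [← Finset.coe_insert, Finset.insert_erase ha]
      have e2 : (insert b (↑(t.erase b) : Set α)) = (↑t : Set α) := by
        rw [← Finset.coe_insert, Finset.insert_erase hbt']
      rw [e1, e2] at h2
      exact h2
    · intro i hi
      by_cases hia : i = a
      · subst hia
        rw [Function.update_self]
        exact hgb.symm
      · rw [Function.update_of_ne hia]
        exact hπ' i (Finset.mem_erase.2 ⟨hia, hi⟩)

lemma key (hn : 2 ≤ n) (lam y z : Fin n → ℝ)
    (σ : Equiv.Perm (Fin n)) (ε : Fin n → ℝ)
    (hε1 : ∀ i, ε i = 1 ∨ ε i = -1) (hεp : (∏ i, ε i) = 1)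
    (hz : ∀ i, z i = ε i * y (σ⁻¹ i))
    (hmono : ∀ i j : Fin n, i ≤ j → lam j ≤ lam i) (hnn : ∀ i, 0 ≤ lam i)
    (hychain : ∀ i j : Fin n, i ≤ j → (j : ℕ) < n - 1 → y j ≤ y i)
    (hylast : ∀ i : Fin n, (i : ℕ) < n - 1 → |y ⟨n - 1, Nat.sub_lt (by omega) Nat.one_pos⟩| ≤ y i)
    (heq : (∑ i, lam i * z i) = ∑ i, lam i * y i) :
    ∃ (τ : Equiv.Perm (Fin n)) (η : Fin n → ℝ),
      (∀ i, η i = 1 ∨ η i = -1) ∧ (∏ i, η i) = 1 ∧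
      (∀ i, lam i = η i * lam (τ i)) ∧ (∀ i, z i = η i * y (τ i)) := by
  classical
  set L : Fin n := ⟨n - 1, Nat.sub_lt (by omega) Nat.one_pos⟩ with hLdef
  have hval := boundary hn lam y z σ ε hε1 hεp hz hmono hnn hychain hylast heq
  set P : Finset (Fin n) := univ.filter (fun i => 0 < lam i) with hPdef
  set m := P.card with hmdef
  have hPdc : ∀ i j : Fin n, i ≤ j → j ∈ P → i ∈ P := by
    intro i j hij hj
    rw [hPdef, Finset.mem_filter] at hj ⊢
    exact ⟨Finset.mem_univ _, lt_of_lt_of_le hj.2 (hmono i j hij)⟩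
  have hmemP := dc_mem_iff P hPdc
  have hmn : m ≤ n := by
    have h1 := Finset.card_le_univ P
    rw [Fintype.card_fin] at h1
    exact h1
  have hPeq : P = pre n m := by
    ext i
    rw [mem_pre]
    exact hmemP i
  have hbnd_m : m = 0 ∨ lamN lam m < lamN lam (m - 1) := by
    rcases Nat.eq_zero_or_pos m with h | h
    · left; exact h
    right
    have hm1n : m - 1 < n := by omega
    have hmem1 : (⟨m - 1, hm1n⟩ : Fin n) ∈ P :=
      (hmemP _).2 (by exact (by omega : m - 1 < m))
    rw [hPdef, Finset.mem_filter] at hmem1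
    have e1 : lamN lam (m - 1) = lam ⟨m - 1, hm1n⟩ := by simp [lamN, hm1n]
    have e2 : lamN lam m ≤ 0 := by
      by_cases h2 : m < n
      · have hnm : ¬ 0 < lam ⟨m, h2⟩ := by
          intro hc
          have h3 : m < m := (hmemP _).1
            (by rw [hPdef, Finset.mem_filter]; exact ⟨Finset.mem_univ _, hc⟩)
          omega
        have e3 : lamN lam m = lam ⟨m, h2⟩ := by simp [lamN, h2]
        rw [e3]
        exact le_of_not_gt hnm
      · have e3 : lamN lam m = 0 := by simp [lamN, h2]
        rw [e3]
    rw [e1]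
    linarith [hmem1.2]
  have hPair : (pre n m).val.map (fun i => (lam i, z i))
      = (pre n m).val.map (fun i => (lam i, y i)) :=
    blockInd hn lam y z hmono hnn hval m hmn hbnd_m
  have hPzy : P.val.map z = P.val.map y := by
    have h1 := congrArg (Multiset.map (Prod.snd : ℝ × ℝ → ℝ)) hPair
    rw [Multiset.map_map, Multiset.map_map] at h1
    rw [hPeq]
    simpa [Function.comp] using h1
  have hAbs : (univ : Finset (Fin n)).val.map (fun i => |z i|)
      = (univ : Finset (Fin n)).val.map (fun i => |y i|) := by
    have h1 : ∀ i, |z i| = |y (σ⁻¹ i)| := by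
      intro i
      rw [hz i, abs_mul]
      rcases hε1 i with h | h <;> rw [h] <;> simp
    calc (univ : Finset (Fin n)).val.map (fun i => |z i|)
        = (univ : Finset (Fin n)).val.map (fun i => |y (σ⁻¹ i)|) :=
          Multiset.map_congr rfl (fun x _ => h1 x)
      _ = (univ : Finset (Fin n)).val.map (fun i => |y i|) := mapPerm (fun i => |y i|) σ⁻¹
  set Q : Finset (Fin n) := univ.filter (fun i => ¬ 0 < lam i) with hQdef
  have hQ0 : ∀ i ∈ Q, lam i = 0 := by
    intro i hi
    rw [hQdef, Finset.mem_filter] at hi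
    exact le_antisymm (le_of_not_gt hi.2) (hnn i)
  have husplit : (univ : Finset (Fin n)).val = P.val + Q.val := by
    rw [hPdef, hQdef, Finset.filter_val, Finset.filter_val]
    exact (Multiset.filter_add_not _ _).symm
  have hPabs : P.val.map (fun i => |z i|) = P.val.map (fun i => |y i|) := by
    have h1 := congrArg (Multiset.map (fun v : ℝ => |v|)) hPzy
    rw [Multiset.map_map, Multiset.map_map] at h1
    simpa [Function.comp] using h1
  have hQabs : Q.val.map (fun i => |z i|) = Q.val.map (fun i => |y i|) := by
    have h1 := hAbs
    rw [husplit, Multiset.map_add, Multiset.map_add, hPabs] at h1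
    exact add_left_cancel h1
  set f : Fin n → ℝ × ℝ := fun i => (lam i, if lam i = 0 then |z i| else z i) with hfdef
  set g2 : Fin n → ℝ × ℝ := fun i => (lam i, if lam i = 0 then |y i| else y i) with hg2def
  have hPne : ∀ i ∈ P.val, lam i ≠ 0 := by
    intro i hi
    have h1 : i ∈ P := hi
    rw [hPdef, Finset.mem_filter] at h1
    exact ne_of_gt h1.2
  have hM : (univ : Finset (Fin n)).val.map f = (univ : Finset (Fin n)).val.map g2 := by
    rw [husplit, Multiset.map_add, Multiset.map_add]
    have hPpart : P.val.map f = P.val.map g2 := by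
      calc P.val.map f = P.val.map (fun i => (lam i, z i)) := by
            apply Multiset.map_congr rfl
            intro x hx
            simp only [hfdef]
            rw [if_neg (hPne x hx)]
        _ = P.val.map (fun i => (lam i, y i)) := by rw [hPeq]; exact hPair
        _ = P.val.map g2 := by
            apply Multiset.map_congr rfl
            intro x hx
            simp only [hg2def]
            rw [if_neg (hPne x hx)]
    have hQpart : Q.val.map f = Q.val.map g2 := by
      calc Q.val.map f
          = (Q.val.map (fun i => |z i|)).map (fun v => ((0 : ℝ), v)) := by
            rw [Multiset.map_map]
            apply Multiset.map_congr rfl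
            intro x hx
            have h0 := hQ0 x hx
            simp [hfdef, Function.comp, h0]
        _ = (Q.val.map (fun i => |y i|)).map (fun v => ((0 : ℝ), v)) := by rw [hQabs]
        _ = Q.val.map g2 := by
            rw [Multiset.map_map]
            apply Multiset.map_congr rfl
            intro x hx
            have h0 := hQ0 x hx
            simp [hg2def, Function.comp, h0]
    rw [hPpart, hQpart]
  obtain ⟨π, hbijOn, hπ⟩ := extract n univ univ f g2
    (by rw [Finset.card_univ, Fintype.card_fin]) hM
  have hbij : Function.Bijective π := by
    rw [← Set.bijOn_univ]
    simpa using hbijOn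
  have hπ' : ∀ i, f i = g2 (π i) := fun i => hπ i (Finset.mem_univ i)
  have hlameq : ∀ i, lam i = lam (π i) := by
    intro i
    have h1 := congrArg Prod.fst (hπ' i)
    simpa [hfdef, hg2def] using h1
  have hzcase : ∀ i, lam i ≠ 0 → z i = y (π i) := by
    intro i h0
    have h1 := congrArg Prod.snd (hπ' i)
    simp only [hfdef, hg2def] at h1
    rw [if_neg h0, if_neg (by rw [← hlameq i]; exact h0)] at h1
    exact h1
  have habscase : ∀ i, lam i = 0 → |z i| = |y (π i)| := by
    intro i h0
    have h1 := congrArg Prod.snd (hπ' i)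
    simp only [hfdef, hg2def] at h1
    rw [if_pos h0, if_pos (by rw [← hlameq i]; exact h0)] at h1
    exact h1
  set η₀ : Fin n → ℝ := fun i => if z i = y (π i) then 1 else -1 with hη₀def
  have hη₀1 : ∀ i, η₀ i = 1 ∨ η₀ i = -1 := by
    intro i
    simp only [hη₀def]
    split
    · left; rfl
    · right; rfl
  have hzy₀ : ∀ i, z i = η₀ i * y (π i) := by
    intro i
    simp only [hη₀def]
    split
    · rw [one_mul]; assumption
    · rename_i hne
      have h0 : lam i = 0 := by
        by_contra hc
        exact hne (hzcase i hc)
      rcases abs_eq_abs.1 (habscase i h0) with h | h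
      · exact absurd h hne
      · rw [h]; ring
  have hlam₀ : ∀ i, lam i = η₀ i * lam (π i) := by
    intro i
    simp only [hη₀def]
    split
    · rw [one_mul]; exact hlameq i
    · rename_i hne
      have h0 : lam i = 0 := by
        by_contra hc
        exact hne (hzcase i hc)
      rw [h0, ← hlameq i, h0]; ring
  have hprodcases : (∏ i, η₀ i) = 1 ∨ (∏ i, η₀ i) = -1 :=
    Finset.prod_induction η₀ (fun r => r = 1 ∨ r = -1)
      (by rintro a b (rfl | rfl) (rfl | rfl) <;> norm_num)
      (Or.inl rfl) (fun i _ => hη₀1 i)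
  rcases hprodcases with hp1 | hpm1
  · refine ⟨Equiv.ofBijective π hbij, η₀, hη₀1, hp1, ?_, ?_⟩
    · intro i; rw [Equiv.ofBijective_apply]; exact hlam₀ i
    · intro i; rw [Equiv.ofBijective_apply]; exact hzy₀ i
  · have hprodz : (∏ i, z i) = ∏ i, y i := by
      calc (∏ i, z i) = ∏ i, (ε i * y (σ⁻¹ i)) := Finset.prod_congr rfl (fun i _ => hz i)
        _ = (∏ i, ε i) * ∏ i, y (σ⁻¹ i) := Finset.prod_mul_distrib
        _ = ∏ i, y i := by rw [hεp, one_mul, Equiv.prod_comp σ⁻¹ y]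
    have hprodz2 : (∏ i, z i) = - ∏ i, y i := by
      calc (∏ i, z i) = ∏ i, (η₀ i * y (π i)) := Finset.prod_congr rfl (fun i _ => hzy₀ i)
        _ = (∏ i, η₀ i) * ∏ i, y (π i) := Finset.prod_mul_distrib
        _ = - ∏ i, y i := by rw [hpm1, hbij.prod_comp y]; ring
    have hy0 : (∏ i, y i) = 0 := by
      have := hprodz2
      rw [hprodz] at this
      linarith
    obtain ⟨j, _, hj0⟩ := Finset.prod_eq_zero_iff.1 hy0
    have hLval : (L : ℕ) = n - 1 := rfl
    have hyL : y L = 0 := by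
      by_cases hjL : j = L
      · rw [← hjL]; exact hj0
      · have hjlt : (j : ℕ) < n - 1 := by
          have := j.isLt
          rcases Nat.lt_or_ge (j : ℕ) (n - 1) with h | h
          · exact h
          · exact absurd (Fin.ext (by omega)) hjL
        have h3 : |y L| ≤ y j := hylast j hjlt
        rw [hj0] at h3
        have h4 := abs_nonneg (y L)
        exact abs_eq_zero.1 (le_antisymm h3 h4)
    have hlamL : lam L = 0 := by
      by_contra hc
      have hLpos : 0 < lam L := lt_of_le_of_ne (hnn L) (Ne.symm hc)
      have hall : ∀ i, lam i ≠ 0 := by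
        intro i
        have hiL : i ≤ L := by
          rw [Fin.le_def]
          exact (by have := i.isLt; omega : (i : ℕ) ≤ n - 1)
        have := hmono i L hiL
        exact ne_of_gt (lt_of_lt_of_le hLpos this)
      have hone : ∀ i, η₀ i = 1 := by
        intro i
        simp only [hη₀def]
        rw [if_pos (hzcase i (hall i))]
      rw [Finset.prod_congr rfl (fun i _ => hone i), Finset.prod_const_one] at hpm1
      norm_num at hpm1
    obtain ⟨i₀, hi₀⟩ := hbij.surjective L
    have hfi₀ := hπ' i₀
    rw [hi₀] at hfi₀
    have hg2L : g2 L = (0, 0) := by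
      simp only [hg2def]
      rw [hlamL, if_pos rfl, hyL, abs_zero]
    rw [hg2L] at hfi₀
    have hlami₀ : lam i₀ = 0 := by
      have := congrArg Prod.fst hfi₀
      simpa [hfdef] using this
    have hzi₀ : z i₀ = 0 := by
      have h2 := congrArg Prod.snd hfi₀
      simp only [hfdef] at h2
      rw [if_pos hlami₀] at h2
      exact abs_eq_zero.1 h2
    have hη₀i₀ : η₀ i₀ = 1 := by
      simp only [hη₀def]
      rw [if_pos (by rw [hzi₀, hi₀, hyL])]
    set η : Fin n → ℝ := Function.update η₀ i₀ (-1) with hηdef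
    have hη1 : ∀ i, η i = 1 ∨ η i = -1 := by
      intro i
      rw [hηdef]
      by_cases h : i = i₀
      · subst h; rw [Function.update_self]; right; rfl
      · rw [Function.update_of_ne h]; exact hη₀1 i
    have hηp : (∏ i, η i) = 1 := by
      rw [hηdef, Finset.prod_update_of_mem (Finset.mem_univ i₀)]
      have h1 : (∏ i, η₀ i) = η₀ i₀ * ∏ x ∈ univ.erase i₀, η₀ x :=
        (Finset.mul_prod_erase univ η₀ (Finset.mem_univ i₀)).symm
      rw [hη₀i₀, one_mul] at h1
      rw [← Finset.erase_eq, ← h1, hpm1]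
      norm_num
    refine ⟨Equiv.ofBijective π hbij, η, hη1, hηp, ?_, ?_⟩
    · intro i
      rw [Equiv.ofBijective_apply, hηdef]
      by_cases h : i = i₀
      · subst h
        rw [Function.update_self, hlami₀, hi₀, hlamL]; ring
      · rw [Function.update_of_ne h]; exact hlam₀ i
    · intro i
      rw [Equiv.ofBijective_apply, hηdef]
      by_cases h : i = i₀
      · subst h
        rw [Function.update_self, hzi₀, hi₀, hyL]; ring
      · rw [Function.update_of_ne h]; exact hzy₀ i

lemma dom_mono (hn : 2 ≤ n) (lam : Fin n → ℝ)
    (hchain : ∀ i j : Fin n, i ≤ j → (j : ℕ) < n - 1 → lam j ≤ lam i)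
    (hlast : ∀ i : Fin n, (i : ℕ) < n - 1 → |lam ⟨n - 1, Nat.sub_lt (by omega) Nat.one_pos⟩| ≤ lam i)
    (hsgn : 0 ≤ lam ⟨n - 1, Nat.sub_lt (by omega) Nat.one_pos⟩) :
    (∀ i j : Fin n, i ≤ j → lam j ≤ lam i) ∧ (∀ i, 0 ≤ lam i) := by
  have hLv : ((⟨n - 1, Nat.sub_lt (by omega) Nat.one_pos⟩ : Fin n) : ℕ) = n - 1 := rfl
  constructor
  · intro i j hij
    by_cases hj : (j : ℕ) < n - 1
    · exact hchain i j hij hj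
    · have hjL : j = ⟨n - 1, Nat.sub_lt (by omega) Nat.one_pos⟩ := Fin.ext (by have := j.isLt; omega)
      by_cases hi : (i : ℕ) < n - 1
      · rw [hjL]; exact le_trans (le_abs_self _) (hlast i hi)
      · have hij2 : i = j := Fin.ext (by have h1 := i.isLt; have h2 := j.isLt; omega)
        rw [hij2]
  · intro i
    by_cases hi : (i : ℕ) < n - 1
    · exact le_trans (abs_nonneg _) (hlast i hi)
    · have hiL : i = ⟨n - 1, Nat.sub_lt (by omega) Nat.one_pos⟩ := Fin.ext (by have := i.isLt; omega)
      rw [hiL]; exact hsgn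

end Stmt15Aux

open Stmt15Aux

/-- The group of even signed permutations of `ℝⁿ` (the Weyl group of type `Dₙ`): maps
`x ↦ (ε i * x (σ⁻¹ i)) i` with `σ` a permutation, each `ε i ∈ {−1, 1}` and `∏ i, ε i = 1`. -/
def EvenSignedPerm (n : ℕ) : Set ((Fin n → ℝ) → Fin n → ℝ) :=
  {g | ∃ (σ : Equiv.Perm (Fin n)) (ε : Fin n → ℝ),
    (∀ i, ε i = 1 ∨ ε i = -1) ∧ (∏ i : Fin n, ε i) = 1 ∧
    ∀ (x : Fin n → ℝ) (i : Fin n), g x i = ε i * x (σ⁻¹ i)}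

/-- Killing-max property for the root system `Dₙ`. For `λ, y` in the closed
Weyl chamber of type `Dₙ` (`λ₁ ≥ … ≥ λ_{n-1} ≥ |λₙ|` and likewise for `y`) and any even
signed permutation `g`, `⟨λ, g y⟩ = ⟨λ, y⟩` iff `g = g₁ ∘ g₂` with `g₁, g₂` even signed
permutations fixing `λ` and `y` respectively. -/
theorem stmt_15 (n : ℕ) (hn : 2 ≤ n) (lam y : Fin n → ℝ)
    (hlamchain : ∀ i j : Fin n, i ≤ j → (j : ℕ) < n - 1 → lam j ≤ lam i)
    (hlamlast : ∀ i : Fin n, (i : ℕ) < n - 1 → |lam ⟨n - 1, by omega⟩| ≤ lam i)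
    (hychain : ∀ i j : Fin n, i ≤ j → (j : ℕ) < n - 1 → y j ≤ y i)
    (hylast : ∀ i : Fin n, (i : ℕ) < n - 1 → |y ⟨n - 1, by omega⟩| ≤ y i)
    (g : (Fin n → ℝ) → Fin n → ℝ) (hg : g ∈ EvenSignedPerm n) :
    (∑ i : Fin n, lam i * g y i) = (∑ i : Fin n, lam i * y i) ↔
      ∃ g₁ ∈ EvenSignedPerm n, ∃ g₂ ∈ EvenSignedPerm n,
        g₁ lam = lam ∧ g₂ y = y ∧ g = g₁ ∘ g₂ := by
    classical
  obtain ⟨σ, ε, hε1, hεp, hgdef⟩ := hg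
  set L : Fin n := ⟨n - 1, by omega⟩ with hLdef
  have hLv : (L : ℕ) = n - 1 := rfl
  constructor
  · intro heq
    set z : Fin n → ℝ := fun i => ε i * y (σ⁻¹ i) with hzdef
    have hz : ∀ i, z i = ε i * y (σ⁻¹ i) := fun i => rfl
    have heqz : (∑ i, lam i * z i) = ∑ i, lam i * y i := by
      rw [← heq]
      exact Finset.sum_congr rfl (fun i _ => by rw [hgdef y i])
    have main : ∃ (τ : Equiv.Perm (Fin n)) (η : Fin n → ℝ),
        (∀ i, η i = 1 ∨ η i = -1) ∧ (∏ i, η i) = 1 ∧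
        (∀ i, lam i = η i * lam (τ i)) ∧ (∀ i, z i = η i * y (τ i)) := by
      by_cases hsgn : 0 ≤ lam L
      · obtain ⟨hmono, hnn⟩ := Stmt15Aux.dom_mono hn lam hlamchain hlamlast hsgn
        exact Stmt15Aux.key hn lam y z σ ε hε1 hεp hz hmono hnn hychain hylast heqz
      · -- flip the last coordinate
        set e : Fin n → ℝ := fun i => if i = L then -1 else 1 with hedef
        have he1 : ∀ i, e i = 1 ∨ e i = -1 := by
          intro i
          simp only [hedef]
          split
          · right; rfl
          · left; rfl
        have he2 : ∀ i, e i * e i = 1 := by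
          intro i; rcases he1 i with h | h <;> rw [h] <;> norm_num
        have heL : e L = -1 := by simp [hedef]
        have heoff : ∀ i : Fin n, (i : ℕ) < n - 1 → e i = 1 := by
          intro i hi
          have : i ≠ L := by
            intro h
            rw [h, hLv] at hi
            omega
          simp [hedef, this]
        set lam' : Fin n → ℝ := fun i => e i * lam i with hlam'def
        set y' : Fin n → ℝ := fun i => e i * y i with hy'def
        set z' : Fin n → ℝ := fun i => e i * z i with hz'def
        set ε' : Fin n → ℝ := fun i => e i * e (σ⁻¹ i) * ε i with hε'def
        have hε'1 : ∀ i, ε' i = 1 ∨ ε' i = -1 := by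
          intro i
          rcases he1 i with h1 | h1 <;> rcases he1 (σ⁻¹ i) with h2 | h2 <;>
            rcases hε1 i with h3 | h3 <;> simp only [hε'def, h1, h2, h3] <;> norm_num
        have hprode : (∏ i, e i) = -1 := by
          have h1 : (∏ i, e i) = ∏ i, (if i = L then (-1 : ℝ) else 1) := rfl
          rw [h1, Finset.prod_ite_eq' Finset.univ L (fun _ => (-1 : ℝ))]
          simp
        have hε'p : (∏ i, ε' i) = 1 := by
          have h1 : (∏ i, ε' i) = ((∏ i, e i) * ∏ i, e (σ⁻¹ i)) * ∏ i, ε i := by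
            simp only [hε'def]
            rw [Finset.prod_mul_distrib, Finset.prod_mul_distrib]
          rw [h1, Equiv.prod_comp σ⁻¹ e, hprode, hεp]
          norm_num
        have hz'eq : ∀ i, z' i = ε' i * y' (σ⁻¹ i) := by
          intro i
          simp only [hz'def, hε'def, hy'def]
          rw [hz i]
          have hr : e i * e (σ⁻¹ i) * ε i * (e (σ⁻¹ i) * y (σ⁻¹ i))
              = e i * (ε i * y (σ⁻¹ i)) * (e (σ⁻¹ i) * e (σ⁻¹ i)) := by ring
          rw [hr, he2 (σ⁻¹ i), mul_one]
        have hlam'chain : ∀ i j : Fin n, i ≤ j → (j : ℕ) < n - 1 → lam' j ≤ lam' i := by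
          intro i j hij hj
          have hi : (i : ℕ) < n - 1 := lt_of_le_of_lt hij hj
          simp only [hlam'def]
          rw [heoff i hi, heoff j hj, one_mul, one_mul]
          exact hlamchain i j hij hj
        have hlam'last : ∀ i : Fin n, (i : ℕ) < n - 1 → |lam' ⟨n - 1, by omega⟩| ≤ lam' i := by
          intro i hi
          have hL' : lam' L = -1 * lam L := by simp only [hlam'def]; rw [heL]
          have h2 : lam' i = lam i := by simp only [hlam'def]; rw [heoff i hi, one_mul]
          rw [h2]
          calc |lam' L| = |lam L| := by rw [hL']; rw [neg_one_mul, abs_neg]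
            _ ≤ lam i := hlamlast i hi
        have hy'chain : ∀ i j : Fin n, i ≤ j → (j : ℕ) < n - 1 → y' j ≤ y' i := by
          intro i j hij hj
          have hi : (i : ℕ) < n - 1 := lt_of_le_of_lt hij hj
          simp only [hy'def]
          rw [heoff i hi, heoff j hj, one_mul, one_mul]
          exact hychain i j hij hj
        have hy'last : ∀ i : Fin n, (i : ℕ) < n - 1 → |y' ⟨n - 1, by omega⟩| ≤ y' i := by
          intro i hi
          have hL' : y' L = -1 * y L := by simp only [hy'def]; rw [heL]
          have h2 : y' i = y i := by simp only [hy'def]; rw [heoff i hi, one_mul]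
          rw [h2]
          calc |y' L| = |y L| := by rw [hL']; rw [neg_one_mul, abs_neg]
            _ ≤ y i := hylast i hi
        have hsgn' : 0 ≤ lam' L := by
          push_neg at hsgn
          have hL' : lam' L = -1 * lam L := by simp only [hlam'def]; rw [heL]
          rw [hL']
          linarith
        obtain ⟨hmono', hnn'⟩ := Stmt15Aux.dom_mono hn lam' hlam'chain hlam'last hsgn'
        have heq' : (∑ i, lam' i * z' i) = ∑ i, lam' i * y' i := by
          have h1 : ∀ w : Fin n → ℝ, ∀ i, lam' i * (e i * w i) = lam i * w i := by
            intro w i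
            have hr : lam' i * (e i * w i) = (e i * e i) * (lam i * w i) := by
              simp only [hlam'def]; ring
            rw [hr, he2 i, one_mul]
          calc (∑ i, lam' i * z' i) = ∑ i, lam i * z i :=
                Finset.sum_congr rfl (fun i _ => h1 z i)
            _ = ∑ i, lam i * y i := heqz
            _ = ∑ i, lam' i * y' i :=
                (Finset.sum_congr rfl (fun i _ => h1 y i)).symm
        obtain ⟨τ, η, hη1, hηp, hlam1, hz''⟩ :=
          Stmt15Aux.key hn lam' y' z' σ ε' hε'1 hε'p hz'eq hmono' hnn' hy'chain hy'last heq'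
        refine ⟨τ, fun i => e i * e (τ i) * η i, ?_, ?_, ?_, ?_⟩
        · intro i
          rcases he1 i with h1 | h1 <;> rcases he1 (τ i) with h2 | h2 <;>
            rcases hη1 i with h3 | h3 <;> simp [h1, h2, h3]
        · rw [Finset.prod_mul_distrib, Finset.prod_mul_distrib, Equiv.prod_comp τ e,
            hprode, hηp]
          norm_num
        · intro i
          have h1 : lam' i = η i * lam' (τ i) := hlam1 i
          simp only [hlam'def] at h1
          calc lam i = (e i * e i) * lam i := by rw [he2 i, one_mul]
            _ = e i * (e i * lam i) := by ring
            _ = e i * (η i * (e (τ i) * lam (τ i))) := by rw [h1]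
            _ = e i * e (τ i) * η i * lam (τ i) := by ring
        · intro i
          have h1 : z' i = η i * y' (τ i) := hz'' i
          simp only [hz'def, hy'def] at h1
          calc z i = (e i * e i) * z i := by rw [he2 i, one_mul]
            _ = e i * (e i * z i) := by ring
            _ = e i * (η i * (e (τ i) * y (τ i))) := by rw [h1]
            _ = e i * e (τ i) * η i * y (τ i) := by ring
    obtain ⟨τ, η, hη1, hηp, hlamtau, hzτ⟩ := main
    have hη2 : ∀ i, η i * η i = 1 := by
      intro i; rcases hη1 i with h | h <;> rw [h] <;> norm_num
    refine ⟨(fun x i => η i * x (τ i)), ⟨τ⁻¹, η, hη1, hηp, ?_⟩,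
      (fun x i => (η (τ⁻¹ i) * ε (τ⁻¹ i)) * x (σ⁻¹ (τ⁻¹ i))),
      ⟨τ * σ, fun i => η (τ⁻¹ i) * ε (τ⁻¹ i), ?_, ?_, ?_⟩, ?_, ?_, ?_⟩
    · intro x i; rw [inv_inv]
    · intro i
      rcases hη1 (τ⁻¹ i) with h1 | h1 <;> rcases hε1 (τ⁻¹ i) with h2 | h2 <;>
        simp only [h1, h2] <;> norm_num
    · calc (∏ i, η (τ⁻¹ i) * ε (τ⁻¹ i)) = ∏ i, η i * ε i :=
            Equiv.prod_comp τ⁻¹ (fun j => η j * ε j)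
        _ = (∏ i, η i) * ∏ i, ε i := Finset.prod_mul_distrib
        _ = 1 := by rw [hηp, hεp, one_mul]
    · intro x i
      rw [mul_inv_rev, Equiv.Perm.mul_apply]
    · funext i
      exact (hlamtau i).symm
    · funext i
      show η (τ⁻¹ i) * ε (τ⁻¹ i) * y (σ⁻¹ (τ⁻¹ i)) = y i
      have h1 : ε (τ⁻¹ i) * y (σ⁻¹ (τ⁻¹ i)) = z (τ⁻¹ i) := (hz (τ⁻¹ i)).symm
      calc η (τ⁻¹ i) * ε (τ⁻¹ i) * y (σ⁻¹ (τ⁻¹ i)) = η (τ⁻¹ i) * z (τ⁻¹ i) := by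
            rw [mul_assoc, h1]
        _ = η (τ⁻¹ i) * (η (τ⁻¹ i) * y (τ (τ⁻¹ i))) := by rw [hzτ (τ⁻¹ i)]
        _ = (η (τ⁻¹ i) * η (τ⁻¹ i)) * y (τ (τ⁻¹ i)) := by ring
        _ = y (τ (τ⁻¹ i)) := by rw [hη2, one_mul]
        _ = y i := by rw [show τ (τ⁻¹ i) = i from τ.apply_symm_apply i]
    · funext x
      funext i
      show g x i = η i * ((fun x i => (η (τ⁻¹ i) * ε (τ⁻¹ i)) * x (σ⁻¹ (τ⁻¹ i))) x) (τ i)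
      rw [hgdef x i]
      simp only [show ∀ j, τ⁻¹ (τ j) = j from fun j => τ.symm_apply_apply j]
      calc ε i * x (σ⁻¹ i) = (η i * η i) * (ε i * x (σ⁻¹ i)) := by rw [hη2 i, one_mul]
        _ = η i * (η i * ε i * x (σ⁻¹ i)) := by ring
  · rintro ⟨g₁, ⟨σ₁, ε₁, hε₁1, hε₁p, hg₁⟩, g₂, hg₂mem, hfix, hyfix, hcomp⟩
    have hgy : g y = g₁ y := by
      rw [hcomp]
      show g₁ (g₂ y) = g₁ y
      rw [hyfix]
    have hfix' : ∀ i, lam i = ε₁ i * lam (σ₁⁻¹ i) := by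
      intro i
      conv_lhs => rw [← hfix]
      rw [hg₁ lam i]
    have hε₁2 : ∀ i, ε₁ i * ε₁ i = 1 := by
      intro i; rcases hε₁1 i with h | h <;> rw [h] <;> norm_num
    calc (∑ i, lam i * g y i) = ∑ i, lam i * (ε₁ i * y (σ₁⁻¹ i)) := by
          rw [hgy]
          exact Finset.sum_congr rfl (fun i _ => by rw [hg₁ y i])
      _ = ∑ i, lam (σ₁⁻¹ i) * y (σ₁⁻¹ i) := by
          apply Finset.sum_congr rfl
          intro i _
          calc lam i * (ε₁ i * y (σ₁⁻¹ i))
              = (ε₁ i * lam (σ₁⁻¹ i)) * (ε₁ i * y (σ₁⁻¹ i)) := by rw [← hfix' i]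
            _ = (ε₁ i * ε₁ i) * (lam (σ₁⁻¹ i) * y (σ₁⁻¹ i)) := by ring
            _ = lam (σ₁⁻¹ i) * y (σ₁⁻¹ i) := by rw [hε₁2 i, one_mul]
      _ = ∑ i, lam i * y i := Equiv.sum_comp σ₁⁻¹ (fun j => lam j * y j)
end

section
/- In ℝ⁴ with standard basis e₁, e₂, e₃, e₄, let α₁ = e₂ − e₃, α₂ = e₃ − e₄, α₃ = e₄, α₄ = (e₁ − e₂ − e₃ − e₄)/2, and let W ≤ O(ℝ⁴) be the group generated by the four orthogonal reflections s_{α_i}, where s_v(x) = x − 2(⟨v,x⟩/⟨v,v⟩)v (W is the Weyl group of type F₄). Let λ, y lie in the closed Weyl chamber C̄ = {x ∈ ℝ⁴ : x₁ ≥ x₂ + x₃ + x₄ and x₂ ≥ x₃ ≥ x₄ ≥ 0}. Then for every w ∈ W, ⟨λ, w y⟩ = ⟨λ, y⟩ if and only if there exist w₁, w₂ ∈ W with w₁ λ = λ, w₂ y = y and w = w₁ ∘ w₂. (This is the Killing-max property for the root system F₄.) -/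
open scoped RealInnerProductSpace

noncomputable section

/-- Standard basis vectors of `ℝ⁴`. -/
def eb (i : Fin 4) : EuclideanSpace ℝ (Fin 4) := EuclideanSpace.single i 1

/-- The simple roots `α₁ = e₂ − e₃`, `α₂ = e₃ − e₄`, `α₃ = e₄`,
`α₄ = (e₁ − e₂ − e₃ − e₄)/2` of `F₄` (zero-based indexing of the basis). -/
def alphaF4 : Fin 4 → EuclideanSpace ℝ (Fin 4) :=
  ![eb 1 - eb 2, eb 2 - eb 3, eb 3, (1 / 2 : ℝ) • (eb 0 - eb 1 - eb 2 - eb 3)]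

/-- The Weyl group of type `F₄`: the subgroup of the orthogonal group of `ℝ⁴` generated by
the four reflections `s_{αᵢ}`, `s_v x = x − 2(⟪v,x⟫/⟪v,v⟫) v`. -/
def WF4 : Subgroup (EuclideanSpace ℝ (Fin 4) ≃ₗᵢ[ℝ] EuclideanSpace ℝ (Fin 4)) :=
  Subgroup.closure
    {w | ∃ i : Fin 4, ∀ x : EuclideanSpace ℝ (Fin 4),
      w x = x - (2 * ⟪alphaF4 i, x⟫ / ⟪alphaF4 i, alphaF4 i⟫) • alphaF4 i}

/-! ### Integer-arithmetic facts about the (rescaled) `F₄` root system -/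

abbrev V4 := Fin 4 → ℤ

def dotZ (a b : V4) : ℤ := a 0 * b 0 + a 1 * b 1 + a 2 * b 2 + a 3 * b 3

def reflZ (v x : V4) : V4 := x - (2 * dotZ v x / dotZ v v) • v

def aZ : Fin 4 → V4 := ![![0,2,-2,0], ![0,0,2,-2], ![0,0,0,2], ![1,-1,-1,-1]]

def deltaZ : V4 := ![8,4,2,1]

def cZ (b : V4) : Fin 4 → ℤ :=
  ![(b 0 + b 1)/2, (2*b 0 + b 1 + b 2)/2, (3*b 0 + b 1 + b 2 + b 3)/2, b 0]

def rZ : Fin 48 → V4 :=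
  ![![2, 0, 0, 0],
    ![-2, 0, 0, 0],
    ![0, 2, 0, 0],
    ![0, -2, 0, 0],
    ![0, 0, 2, 0],
    ![0, 0, -2, 0],
    ![0, 0, 0, 2],
    ![0, 0, 0, -2],
    ![2, 2, 0, 0],
    ![2, -2, 0, 0],
    ![-2, 2, 0, 0],
    ![-2, -2, 0, 0],
    ![2, 0, 2, 0],
    ![2, 0, -2, 0],
    ![-2, 0, 2, 0],
    ![-2, 0, -2, 0],
    ![2, 0, 0, 2],
    ![2, 0, 0, -2],
    ![-2, 0, 0, 2],
    ![-2, 0, 0, -2],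
    ![0, 2, 2, 0],
    ![0, 2, -2, 0],
    ![0, -2, 2, 0],
    ![0, -2, -2, 0],
    ![0, 2, 0, 2],
    ![0, 2, 0, -2],
    ![0, -2, 0, 2],
    ![0, -2, 0, -2],
    ![0, 0, 2, 2],
    ![0, 0, 2, -2],
    ![0, 0, -2, 2],
    ![0, 0, -2, -2],
    ![1, 1, 1, 1],
    ![1, 1, 1, -1],
    ![1, 1, -1, 1],
    ![1, 1, -1, -1],
    ![1, -1, 1, 1],
    ![1, -1, 1, -1],
    ![1, -1, -1, 1],
    ![1, -1, -1, -1],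
    ![-1, 1, 1, 1],
    ![-1, 1, 1, -1],
    ![-1, 1, -1, 1],
    ![-1, 1, -1, -1],
    ![-1, -1, 1, 1],
    ![-1, -1, 1, -1],
    ![-1, -1, -1, 1],
    ![-1, -1, -1, -1]]

set_option maxRecDepth 100000 in
theorem D2 : ∀ k : Fin 48, dotZ deltaZ (rZ k) ≠ 0 := by decide

set_option maxRecDepth 100000 in
theorem D6 : ∀ k k' : Fin 48, rZ k = rZ k' → k = k' := by decide

set_option maxRecDepth 100000 in
theorem D3 : ∀ i : Fin 4, ∃ k, rZ k = aZ i ∧ 0 < dotZ deltaZ (aZ i) := by decide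

set_option maxRecDepth 100000 in
theorem D0 : ∀ (i : Fin 4) (k : Fin 48),
    (2 * dotZ (aZ i) (rZ k) / dotZ (aZ i) (aZ i)) * dotZ (aZ i) (aZ i)
      = 2 * dotZ (aZ i) (rZ k) := by decide

set_option maxRecDepth 100000 in
theorem D1 : ∀ (i : Fin 4) (k : Fin 48), ∃ k', reflZ (aZ i) (rZ k) = rZ k' := by decide

set_option maxRecDepth 100000 in
theorem D4 : ∀ (i : Fin 4) (k : Fin 48), 0 < dotZ deltaZ (rZ k) → rZ k ≠ aZ i →
    0 < dotZ deltaZ (reflZ (aZ i) (rZ k)) := by decide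

set_option maxRecDepth 100000 in
theorem D5 : ∀ k : Fin 48, (∀ j : Fin 4, rZ k j = ∑ i : Fin 4, cZ (rZ k) i * aZ i j) ∧
    (0 < dotZ deltaZ (rZ k) → ∀ i, 0 ≤ cZ (rZ k) i) := by decide

set_option maxRecDepth 100000 in
theorem D8 : ∀ i : Fin 4, reflZ (aZ i) (aZ i) = -aZ i := by decide

set_option maxRecDepth 100000 in
theorem D9 : ∀ k : Fin 48, ∃ k', -rZ k = rZ k' := by decide

/-! ### Bridge to `ℝ⁴` -/

abbrev E4 := EuclideanSpace ℝ (Fin 4)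

def toR (a : V4) : E4 := WithLp.toLp 2 (fun i => (a i : ℝ))

@[simp] lemma toR_apply (a : V4) (i : Fin 4) : toR a i = (a i : ℝ) := rfl

lemma toR_sub (a b : V4) : toR (a - b) = toR a - toR b := by
  ext i; simp [toR]

lemma toR_neg (a : V4) : toR (-a) = - toR a := by
  ext i; simp [toR]

lemma toR_smul (c : ℤ) (a : V4) : toR (c • a) = (c : ℝ) • toR a := by
  ext i; simp [toR]

lemma toR_inj {a b : V4} (h : toR a = toR b) : a = b := by
  funext i
  have : toR a i = toR b i := by rw [h]
  rw [toR_apply, toR_apply] at this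
  exact Int.cast_injective (α := ℝ) this

lemma inner_toR (a b : V4) : ⟪toR a, toR b⟫ = (dotZ a b : ℝ) := by
  simp only [PiLp.inner_apply, RCLike.inner_apply, conj_trivial, Fin.sum_univ_four, toR_apply,
    dotZ]
  push_cast
  ring

lemma alpha_eq' (i : Fin 4) : alphaF4 i = (1 / 2 : ℝ) • toR (aZ i) := by
  fin_cases i <;> (ext j; fin_cases j) <;>
    simp [alphaF4, eb, toR, aZ, EuclideanSpace.single_apply, PiLp.smul_apply, PiLp.sub_apply]

lemma dotZ_aZ_pos (i : Fin 4) : 0 < dotZ (aZ i) (aZ i) := by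
  fin_cases i <;> decide

lemma inner_alpha_self (i : Fin 4) :
    ⟪alphaF4 i, alphaF4 i⟫ = (dotZ (aZ i) (aZ i) : ℝ) / 4 := by
  rw [alpha_eq' i, real_inner_smul_left, real_inner_smul_right, inner_toR]
  ring

lemma inner_alpha_self_pos (i : Fin 4) : 0 < ⟪alphaF4 i, alphaF4 i⟫ := by
  rw [inner_alpha_self]
  have := dotZ_aZ_pos i
  positivity

/-! ### The simple reflections -/

def sI (i : Fin 4) : E4 ≃ₗᵢ[ℝ] E4 := Submodule.reflection (ℝ ∙ alphaF4 i)ᗮ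

lemma sI_apply (i : Fin 4) (x : E4) :
    sI i x = x - (2 * ⟪alphaF4 i, x⟫ / ⟪alphaF4 i, alphaF4 i⟫) • alphaF4 i := by
  rw [sI, Submodule.reflection_orthogonal_apply, Submodule.reflection_singleton_apply]
  have h : ((‖alphaF4 i‖ : ℝ) ^ 2) = ⟪alphaF4 i, alphaF4 i⟫ :=
    (real_inner_self_eq_norm_sq _).symm
  simp only [RCLike.ofReal_real_eq_id, id_eq] at *
  rw [h]
  rw [two_smul, ← neg_sub, two_mul, add_div, add_smul]
  abel

lemma sI_mem : ∀ i, sI i ∈ WF4 := fun i =>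
  Subgroup.subset_closure ⟨i, sI_apply i⟩

lemma gen_eq_sI {w : E4 ≃ₗᵢ[ℝ] E4}
    (hw : ∃ i : Fin 4, ∀ x : E4,
      w x = x - (2 * ⟪alphaF4 i, x⟫ / ⟪alphaF4 i, alphaF4 i⟫) • alphaF4 i) :
    ∃ i, w = sI i := by
  obtain ⟨i, hi⟩ := hw
  exact ⟨i, LinearIsometryEquiv.ext fun x => (hi x).trans (sI_apply i x).symm⟩

lemma sI_sI (i : Fin 4) (x : E4) : sI i (sI i x) = x := Submodule.reflection_reflection _ x

lemma sI_mul_sI (i : Fin 4) : sI i * sI i = 1 := Submodule.reflection_mul_reflection _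

lemma prod_reverse_inv : ∀ l : List (Fin 4),
    ((l.map sI).prod)⁻¹ = (l.reverse.map sI).prod := by
  intro l
  induction l with
  | nil => simp
  | cons j t ih =>
    rw [List.map_cons, List.prod_cons, mul_inv_rev, ih, List.reverse_cons, List.map_append,
      List.prod_append, List.map_cons, List.map_nil, List.prod_cons, List.prod_nil, mul_one,
      sI, Submodule.reflection_inv]

/-- Word representation of elements of WF4. -/
lemma exists_word {w : E4 ≃ₗᵢ[ℝ] E4} (hw : w ∈ WF4) :
    ∃ l : List (Fin 4), w = (l.map sI).prod := by
  refine Subgroup.closure_induction ?_ ?_ ?_ ?_ hw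
  · intro g hg
    obtain ⟨i, rfl⟩ := gen_eq_sI hg
    exact ⟨[i], by simp⟩
  · exact ⟨[], rfl⟩
  · rintro g h _ _ ⟨l, rfl⟩ ⟨m, rfl⟩
    exact ⟨l ++ m, by simp⟩
  · rintro g _ ⟨l, rfl⟩
    exact ⟨l.reverse, prod_reverse_inv l⟩

lemma word_mem (l : List (Fin 4)) : (l.map sI).prod ∈ WF4 := by
  induction l with
  | nil => exact one_mem _
  | cons j t ih => simpa using mul_mem (sI_mem j) ih

/-! ### Action on the rescaled roots -/

def rootR (k : Fin 48) : E4 := toR (rZ k)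

lemma rootR_inj {k k' : Fin 48} (h : rootR k = rootR k') : k = k' :=
  D6 k k' (toR_inj h)

lemma sI_toR_root (i : Fin 4) (k : Fin 48) :
    sI i (rootR k) = toR (reflZ (aZ i) (rZ k)) := by
  have hd : (dotZ (aZ i) (aZ i) : ℝ) ≠ 0 := by exact_mod_cast (dotZ_aZ_pos i).ne'
  have hq : ((2 * dotZ (aZ i) (rZ k) / dotZ (aZ i) (aZ i) : ℤ) : ℝ)
      = 2 * (dotZ (aZ i) (rZ k) : ℝ) / (dotZ (aZ i) (aZ i) : ℝ) := by
    rw [eq_div_iff hd]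
    exact_mod_cast D0 i k
  rw [sI_apply, reflZ, toR_sub, toR_smul, hq, rootR]
  rw [alpha_eq' i]
  rw [real_inner_smul_left, real_inner_smul_left, real_inner_smul_right, inner_toR, inner_toR]
  rw [smul_smul]
  congr 1
  field_simp

def tau (i : Fin 4) (k : Fin 48) : Fin 48 := (D1 i k).choose

lemma tau_spec (i : Fin 4) (k : Fin 48) : reflZ (aZ i) (rZ k) = rZ (tau i k) :=
  (D1 i k).choose_spec

lemma sI_rootR (i : Fin 4) (k : Fin 48) : sI i (rootR k) = rootR (tau i k) := by
  rw [sI_toR_root, tau_spec]; rfl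

lemma tau_tau (i : Fin 4) (k : Fin 48) : tau i (tau i k) = k := by
  apply rootR_inj
  rw [← sI_rootR, ← sI_rootR, sI_sI]

def ka (i : Fin 4) : Fin 48 := (D3 i).choose

lemma ka_spec (i : Fin 4) : rZ (ka i) = aZ i := (D3 i).choose_spec.1

lemma aZ_pos (i : Fin 4) : 0 < dotZ deltaZ (aZ i) := (D3 i).choose_spec.2

lemma alpha_eq_rootR (i : Fin 4) : alphaF4 i = (1 / 2 : ℝ) • rootR (ka i) := by
  rw [alpha_eq', rootR, ka_spec]

lemma tau_ka (i : Fin 4) : rZ (tau i (ka i)) = -aZ i := by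
  rw [← tau_spec, ka_spec, D8]

/-- Sign functional. -/
def dR (x : E4) : ℝ := ⟪toR deltaZ, x⟫

lemma dR_rootR (k : Fin 48) : dR (rootR k) = (dotZ deltaZ (rZ k) : ℝ) := inner_toR _ _

lemma dR_rootR_ne (k : Fin 48) : dR (rootR k) ≠ 0 := by
  rw [dR_rootR]
  exact_mod_cast D2 k

lemma dR_neg (x : E4) : dR (-x) = - dR x := by
  simp [dR]

lemma word_root (l : List (Fin 4)) (k : Fin 48) :
    ∃ k', ((l.map sI).prod) (rootR k) = rootR k' := by
  induction l generalizing k with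
  | nil => exact ⟨k, by simp⟩
  | cons j t ih =>
    obtain ⟨k', hk'⟩ := ih k
    refine ⟨tau j k', ?_⟩
    rw [List.map_cons, List.prod_cons, LinearIsometryEquiv.coe_mul, Function.comp_apply, hk',
      sI_rootR]

lemma mem_root {w : E4 ≃ₗᵢ[ℝ] E4} (hw : w ∈ WF4) (k : Fin 48) :
    ∃ k', w (rootR k) = rootR k' := by
  obtain ⟨l, rfl⟩ := exists_word hw
  exact word_root l k

/-! ### Positive roots pair nonnegatively with the chamber -/

def Chamber (y : E4) : Prop :=
  y 1 + y 2 + y 3 ≤ y 0 ∧ y 2 ≤ y 1 ∧ y 3 ≤ y 2 ∧ 0 ≤ y 3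

lemma chamber_inner {y : E4} (hy : Chamber y) (i : Fin 4) : 0 ≤ ⟪toR (aZ i), y⟫ := by
  obtain ⟨h1, h2, h3, h4⟩ := hy
  fin_cases i <;>
    simp only [PiLp.inner_apply, RCLike.inner_apply, conj_trivial, Fin.sum_univ_four, toR_apply,
      aZ, Matrix.cons_val_zero, Matrix.cons_val_one, Matrix.head_cons] <;>
    norm_num [Fin.isValue] <;> simp (config := {decide := true}) <;> linarith

lemma chamber_inner_alpha {y : E4} (hy : Chamber y) (i : Fin 4) : 0 ≤ ⟪alphaF4 i, y⟫ := by
  rw [alpha_eq', real_inner_smul_left]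
  have := chamber_inner hy i
  linarith

lemma rootR_decomp (k : Fin 48) :
    rootR k = ∑ i : Fin 4, (cZ (rZ k) i : ℝ) • toR (aZ i) := by
  ext j
  have h := (D5 k).1 j
  rw [rootR, toR_apply]
  have : ((∑ i : Fin 4, (cZ (rZ k) i : ℝ) • toR (aZ i)) j)
      = ∑ i : Fin 4, (cZ (rZ k) i : ℝ) * (aZ i j : ℝ) := by
    simp [Fin.sum_univ_four]
  rw [this, h]
  push_cast
  ring

lemma pos_root_inner_nonneg {k : Fin 48} (hk : 0 < dotZ deltaZ (rZ k))
    {y : E4} (hy : Chamber y) : 0 ≤ ⟪rootR k, y⟫ := by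
  rw [rootR_decomp, sum_inner]
  refine Finset.sum_nonneg fun i _ => ?_
  rw [real_inner_smul_left]
  have h1 : (0:ℝ) ≤ (cZ (rZ k) i : ℝ) := by exact_mod_cast (D5 k).2 hk i
  exact mul_nonneg h1 (chamber_inner hy i)

/-! ### Conjugation and the exchange lemma -/

lemma conj_sI {u : E4 ≃ₗᵢ[ℝ] E4} {i j : Fin 4} (h : u (alphaF4 i) = alphaF4 j) :
    sI j * u = u * sI i := by
  apply LinearIsometryEquiv.ext
  intro x
  rw [LinearIsometryEquiv.coe_mul, LinearIsometryEquiv.coe_mul, Function.comp_apply,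
    Function.comp_apply, sI_apply, sI_apply]
  have e1 : ⟪alphaF4 j, u x⟫ = ⟪alphaF4 i, x⟫ := by
    rw [← h, LinearIsometryEquiv.inner_map_map]
  have e2 : ⟪alphaF4 j, alphaF4 j⟫ = ⟪alphaF4 i, alphaF4 i⟫ := by
    rw [← h, LinearIsometryEquiv.inner_map_map]
  rw [map_sub, map_smul, h, e1, e2]

lemma sI_alpha (i : Fin 4) : sI i (alphaF4 i) = - alphaF4 i := by
  rw [sI_apply]
  rw [mul_div_assoc, div_self (inner_alpha_self_pos i).ne', mul_one, two_smul]
  abel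

/-- The exchange lemma. -/
lemma exchange : ∀ (l : List (Fin 4)) (i : Fin 4),
    dR (((l.map sI).prod) (rootR (ka i))) < 0 →
    ∃ l' : List (Fin 4), l'.length + 1 = l.length ∧
      (l.map sI).prod * sI i = (l'.map sI).prod := by
  intro l
  induction l with
  | nil =>
    intro i hi
    exfalso
    simp only [List.map_nil, List.prod_nil, LinearIsometryEquiv.coe_one, id_eq] at hi
    rw [dR_rootR, ka_spec] at hi
    have := aZ_pos i
    exact absurd hi (by exact_mod_cast not_lt.2 (le_of_lt (by exact_mod_cast this)))
  | cons j t ih =>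
    intro i hi
    set u := (t.map sI).prod with hu
    obtain ⟨m, hm⟩ := word_root t (ka i)
    have hprod : ((j :: t).map sI).prod = sI j * u := by
      rw [List.map_cons, List.prod_cons]
    by_cases hneg : dR (rootR m) < 0
    · obtain ⟨t', ht'len, ht'⟩ := ih i (by rw [hm]; exact hneg)
      refine ⟨j :: t', ?_, ?_⟩
      · simp [← ht'len]
      · rw [hprod, mul_assoc, ht', List.map_cons, List.prod_cons]
    · -- u (rootR (ka i)) = rootR m is positive but sI j makes it negative
      have hmpos : 0 < dotZ deltaZ (rZ m) := by
        rcases lt_or_gt_of_ne (D2 m) with h | h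
        · exfalso; apply hneg; rw [dR_rootR]; exact_mod_cast h
        · exact h
      have hji : dR (sI j (rootR m)) < 0 := by
        rw [← hm, ← Function.comp_apply (f := ⇑(sI j)), ← LinearIsometryEquiv.coe_mul, ← hprod]
        exact hi
      have hmj : rZ m = aZ j := by
        by_contra hne
        have := D4 j m hmpos hne
        rw [tau_spec] at this
        rw [sI_rootR, dR_rootR] at hji
        have : (0:ℝ) < dR (rootR (tau j m)) := by rw [dR_rootR]; exact_mod_cast this
        rw [dR_rootR] at this
        linarith [hji, this]
      have halpha : u (alphaF4 i) = alphaF4 j := by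
        rw [alpha_eq_rootR i, map_smul, hm, alpha_eq' j, ← hmj]
        rfl
      refine ⟨t, ?_, ?_⟩
      · simp
      · rw [hprod, mul_assoc, ← conj_sI halpha, ← mul_assoc, sI_mul_sI, one_mul]

lemma sI_rootR_ka (i : Fin 4) : sI i (rootR (ka i)) = - rootR (ka i) := by
  rw [sI_rootR]
  have h : rZ (tau i (ka i)) = -rZ (ka i) := by rw [tau_ka, ka_spec]
  rw [rootR, h, toR_neg, rootR]

/-- An element of `W(F₄)` sending all simple roots to positive roots is the identity. -/
lemma eq_one_of_pos : ∀ n (l : List (Fin 4)), l.length ≤ n →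
    (∀ i, 0 < dR (((l.map sI).prod) (rootR (ka i)))) → (l.map sI).prod = 1 := by
  intro n
  induction n with
  | zero =>
    intro l hl _
    rw [List.length_eq_zero_iff.1 (Nat.le_zero.1 hl)]
    rfl
  | succ n ih =>
    intro l hl hpos
    rcases List.eq_nil_or_concat l with rfl | ⟨t, j, rfl⟩
    · rfl
    · simp only [List.concat_eq_append] at hl hpos ⊢
      set w := ((t ++ [j]).map sI).prod with hw
      have hw' : w = (t.map sI).prod * sI j := by
        rw [hw, List.map_append, List.prod_append, List.map_cons, List.map_nil, List.prod_cons,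
          List.prod_nil, mul_one]
      have hneg : dR ((t.map sI).prod (rootR (ka j))) < 0 := by
        have h1 := hpos j
        have h2 : w (rootR (ka j)) = (t.map sI).prod (sI j (rootR (ka j))) := by
          rw [hw', LinearIsometryEquiv.coe_mul, Function.comp_apply]
        rw [h2, sI_rootR_ka, map_neg] at h1
        rw [dR_neg] at h1
        linarith
      obtain ⟨l'', hlen, hl''⟩ := exchange t j hneg
      have hwl : w = (l''.map sI).prod := by rw [hw', ← hl'']
      have hlen2 : l''.length ≤ n := by
        have : l''.length + 1 = t.length := hlen
        have ht : t.length + 1 = (t ++ [j]).length := by simp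
        omega
      have := ih l'' hlen2 (by rw [← hwl]; exact hpos)
      rw [hwl, this]

open Classical in
/-- The "inversion set" of `w`. -/
noncomputable def NS (w : E4 ≃ₗᵢ[ℝ] E4) : Finset (Fin 48) :=
  Finset.univ.filter (fun k => 0 < dotZ deltaZ (rZ k) ∧ dR (w (rootR k)) < 0)

open Classical in
lemma mem_NS {w : E4 ≃ₗᵢ[ℝ] E4} {k : Fin 48} :
    k ∈ NS w ↔ 0 < dotZ deltaZ (rZ k) ∧ dR (w (rootR k)) < 0 := by
  simp [NS]

lemma rZ_ne_of_ne_ka {i : Fin 4} {k : Fin 48} (h : k ≠ ka i) : rZ k ≠ aZ i := by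
  intro he
  exact h (D6 k (ka i) (by rw [he, ka_spec]))

lemma tau_pos {i : Fin 4} {k : Fin 48} (hk : 0 < dotZ deltaZ (rZ k)) (hne : k ≠ ka i) :
    0 < dotZ deltaZ (rZ (tau i k)) := by
  rw [← tau_spec]
  exact D4 i k hk (rZ_ne_of_ne_ka hne)

lemma dR_rootR_tau_ka (i : Fin 4) : dotZ deltaZ (rZ (tau i (ka i))) < 0 := by
  rw [tau_ka]
  have := aZ_pos i
  have h : dotZ deltaZ (-aZ i) = -dotZ deltaZ (aZ i) := by
    simp [dotZ]
    ring
  omega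

lemma NS_card {u : E4 ≃ₗᵢ[ℝ] E4} (i : Fin 4)
    (hneg : dR (u (rootR (ka i))) < 0) :
    (NS (u * sI i)).card + 1 = (NS u).card := by
  have hka_mem : ka i ∈ NS u := mem_NS.2 ⟨by rw [ka_spec]; exact aZ_pos i, hneg⟩
  have key : ∀ k, (u * sI i) (rootR k) = u (rootR (tau i k)) := by
    intro k
    rw [LinearIsometryEquiv.coe_mul, Function.comp_apply, sI_rootR]
  have hcard : (NS (u * sI i)).card = ((NS u).erase (ka i)).card := by
    apply Finset.card_bij' (fun k _ => tau i k) (fun m _ => tau i m)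
    · intro k hk
      obtain ⟨hk1, hk2⟩ := mem_NS.1 hk
      rw [key] at hk2
      have hkne : k ≠ ka i := by
        intro rfl'
        subst rfl'
        have h3 : u (rootR (tau i (ka i))) = - u (rootR (ka i)) := by
          rw [← map_neg]
          congr 1
          rw [rootR, tau_ka, toR_neg, ← ka_spec i]
          rfl
        rw [h3, dR_neg] at hk2
        linarith
      have htpos : 0 < dotZ deltaZ (rZ (tau i k)) := tau_pos hk1 hkne
      refine Finset.mem_erase.2 ⟨?_, mem_NS.2 ⟨htpos, hk2⟩⟩
      intro he
      have : rZ (tau i (tau i k)) = rZ (tau i (ka i)) := by rw [he]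
      rw [tau_tau] at this
      have hlt := dR_rootR_tau_ka i
      rw [← this] at hlt
      omega
    · intro m hm
      obtain ⟨hmne, hm'⟩ := Finset.mem_erase.1 hm
      obtain ⟨hm1, hm2⟩ := mem_NS.1 hm'
      have htpos : 0 < dotZ deltaZ (rZ (tau i m)) := tau_pos hm1 hmne
      refine mem_NS.2 ⟨htpos, ?_⟩
      rw [key, tau_tau]
      exact hm2
    · intro k _; exact tau_tau i k
    · intro m _; exact tau_tau i m
  rw [hcard, Finset.card_erase_of_mem hka_mem]
  have : 0 < (NS u).card := Finset.card_pos.2 ⟨ka i, hka_mem⟩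
  omega

lemma sI_inv (i : Fin 4) : (sI i)⁻¹ = sI i := by rw [sI]; exact Submodule.reflection_inv

lemma inner_sI_right (i : Fin 4) (a b : E4) : ⟪a, sI i b⟫ = ⟪sI i a, b⟫ := by
  conv_lhs => rw [← sI_sI i a]
  rw [LinearIsometryEquiv.inner_map_map]

def kneg (k : Fin 48) : Fin 48 := (D9 k).choose

lemma kneg_spec (k : Fin 48) : -rZ k = rZ (kneg k) := (D9 k).choose_spec

lemma rootR_kneg (k : Fin 48) : rootR (kneg k) = - rootR k := by
  rw [rootR, ← kneg_spec, toR_neg, rootR]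

lemma dotZ_neg (a b : V4) : dotZ a (-b) = - dotZ a b := by
  simp [dotZ]; ring

/-- Key step: peeling off a simple reflection. -/
lemma key_step {lam y : E4} (hlam : Chamber lam) (hy : Chamber y)
    {w : E4 ≃ₗᵢ[ℝ] E4} (hw : w ∈ WF4) {i : Fin 4}
    (hneg : dR (w⁻¹ (rootR (ka i))) < 0) :
    ∃ c t : ℝ, 0 ≤ c ∧ 0 ≤ t ∧
      ⟪lam, w y⟫ = ⟪lam, (sI i * w) y⟫ - c * t ∧
      (c = 0 → sI i lam = lam) ∧
      (t = 0 → sI i ((sI i * w) y) = (sI i * w) y) := by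
  set c : ℝ := 2 * ⟪alphaF4 i, lam⟫ / ⟪alphaF4 i, alphaF4 i⟫ with hc
  set w' : E4 ≃ₗᵢ[ℝ] E4 := sI i * w with hw'
  set t : ℝ := ⟪alphaF4 i, w' y⟫ with ht
  have hww : ∀ z, w z = sI i (w' z) := by
    intro z
    rw [hw', LinearIsometryEquiv.coe_mul, Function.comp_apply, sI_sI]
  have hc0 : 0 ≤ c := by
    rw [hc]
    have h1 := chamber_inner_alpha hlam i
    have h2 := inner_alpha_self_pos i
    positivity
  -- t ≥ 0
  obtain ⟨m, hm⟩ := mem_root (inv_mem hw) (ka i)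
  have hmneg : dotZ deltaZ (rZ m) < 0 := by
    rw [hm, dR_rootR] at hneg
    exact_mod_cast hneg
  have hknegpos : 0 < dotZ deltaZ (rZ (kneg m)) := by
    rw [← kneg_spec, dotZ_neg]
    omega
  have ht0 : 0 ≤ t := by
    have e1 : w' y = sI i (w y) := by
      rw [hw', LinearIsometryEquiv.coe_mul, Function.comp_apply]
    have e2 : t = -⟪alphaF4 i, w y⟫ := by
      rw [ht, e1, inner_sI_right, sI_alpha, inner_neg_left]
    have e3 : ⟪alphaF4 i, w y⟫ = ⟪w⁻¹ (alphaF4 i), y⟫ := by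
      conv_lhs => rw [← (w.apply_symm_apply (alphaF4 i))]
      rw [LinearIsometryEquiv.inner_map_map, LinearIsometryEquiv.coe_inv]
    have e4 : w⁻¹ (alphaF4 i) = (1/2 : ℝ) • rootR m := by
      rw [alpha_eq_rootR i, map_smul, hm]
    have e5 : -⟪alphaF4 i, w y⟫ = (1/2 : ℝ) * ⟪rootR (kneg m), y⟫ := by
      rw [e3, e4, real_inner_smul_left, rootR_kneg, inner_neg_left]
      ring
    rw [e2, e5]
    have := pos_root_inner_nonneg hknegpos hy
    positivity
  refine ⟨c, t, hc0, ht0, ?_, ?_, ?_⟩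
  · rw [hww y, inner_sI_right, sI_apply, inner_sub_left, real_inner_smul_left, ← hc, ← ht]
  · intro h0
    rw [sI_apply, ← hc, h0, zero_smul, sub_zero]
  · intro h0
    rw [sI_apply]
    rw [ht] at h0
    rw [h0, mul_zero, zero_div, zero_smul, sub_zero]

lemma eq_one_of_not_exists {w : E4 ≃ₗᵢ[ℝ] E4} (hw : w ∈ WF4)
    (h : ¬ ∃ i, dR (w⁻¹ (rootR (ka i))) < 0) : w = 1 := by
  push_neg at h
  obtain ⟨l, hl⟩ := exists_word (inv_mem hw)
  have hpos : ∀ i, 0 < dR (((l.map sI).prod) (rootR (ka i))) := by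
    intro i
    obtain ⟨m, hm⟩ := mem_root (inv_mem hw) (ka i)
    have h1 := h i
    have h2 := dR_rootR_ne m
    rw [hm] at h1
    rw [← hl, hm]
    rcases lt_or_eq_of_le h1 with h3 | h3
    · exact h3
    · exact absurd h3.symm h2
  have := eq_one_of_pos l.length l le_rfl hpos
  rw [← hl] at this
  rw [← inv_inv w, this, inv_one]

lemma card_succ {w : E4 ≃ₗᵢ[ℝ] E4} {i : Fin 4}
    (hneg : dR (w⁻¹ (rootR (ka i))) < 0) :
    (NS (sI i * w)⁻¹).card + 1 = (NS w⁻¹).card := by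
  have h : (sI i * w)⁻¹ = w⁻¹ * sI i := by
    rw [mul_inv_rev, sI_inv]
  rw [h]
  exact NS_card i hneg

/-- Monotonicity: `⟪λ, w y⟫ ≤ ⟪λ, y⟫` on the closed chamber. -/
lemma inner_le {lam y : E4} (hlam : Chamber lam) (hy : Chamber y) :
    ∀ n, ∀ w : E4 ≃ₗᵢ[ℝ] E4, w ∈ WF4 → (NS w⁻¹).card ≤ n → ⟪lam, w y⟫ ≤ ⟪lam, y⟫ := by
  intro n
  induction n with
  | zero =>
    intro w hw hcard
    by_cases hex : ∃ i, dR (w⁻¹ (rootR (ka i))) < 0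
    · exfalso
      obtain ⟨i, hi⟩ := hex
      have : ka i ∈ NS w⁻¹ := mem_NS.2 ⟨by rw [ka_spec]; exact aZ_pos i, hi⟩
      have := Finset.card_pos.2 ⟨ka i, this⟩
      omega
    · rw [eq_one_of_not_exists hw hex]
      simp
  | succ n ih =>
    intro w hw hcard
    by_cases hex : ∃ i, dR (w⁻¹ (rootR (ka i))) < 0
    · obtain ⟨i, hi⟩ := hex
      obtain ⟨c, t, hc, ht, heq, _, _⟩ := key_step hlam hy hw hi
      have hmem : sI i * w ∈ WF4 := mul_mem (sI_mem i) hw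
      have hcard' : (NS (sI i * w)⁻¹).card ≤ n := by
        have := card_succ hi
        omega
      have := ih (sI i * w) hmem hcard'
      nlinarith
    · rw [eq_one_of_not_exists hw hex]
      simp

/-- Main equality analysis. -/
lemma main_eq {lam y : E4} (hlam : Chamber lam) (hy : Chamber y) :
    ∀ n, ∀ w : E4 ≃ₗᵢ[ℝ] E4, w ∈ WF4 → (NS w⁻¹).card ≤ n →
      ⟪lam, w y⟫ = ⟪lam, y⟫ →
      ∃ w₁ ∈ WF4, ∃ w₂ ∈ WF4, w₁ lam = lam ∧ w₂ y = y ∧ w = w₁ * w₂ := by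
  intro n
  induction n with
  | zero =>
    intro w hw hcard _
    by_cases hex : ∃ i, dR (w⁻¹ (rootR (ka i))) < 0
    · exfalso
      obtain ⟨i, hi⟩ := hex
      have : ka i ∈ NS w⁻¹ := mem_NS.2 ⟨by rw [ka_spec]; exact aZ_pos i, hi⟩
      have := Finset.card_pos.2 ⟨ka i, this⟩
      omega
    · refine ⟨1, one_mem _, 1, one_mem _, by simp, by simp, ?_⟩
      rw [eq_one_of_not_exists hw hex, mul_one]
  | succ n ih =>
    intro w hw hcard heq
    by_cases hex : ∃ i, dR (w⁻¹ (rootR (ka i))) < 0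
    · obtain ⟨i, hi⟩ := hex
      obtain ⟨c, t, hc, ht, hkey, hclam, hty⟩ := key_step hlam hy hw hi
      set w' : E4 ≃ₗᵢ[ℝ] E4 := sI i * w with hw'def
      have hmem : w' ∈ WF4 := mul_mem (sI_mem i) hw
      have hcard' : (NS w'⁻¹).card ≤ n := by
        have h5 := card_succ hi
        rw [← hw'def] at h5
        omega
      have hle : ⟪lam, w' y⟫ ≤ ⟪lam, y⟫ :=
        inner_le hlam hy n w' hmem hcard'
      have hct : c * t = 0 := by
        rw [heq] at hkey
        nlinarith
      have heq' : ⟪lam, w' y⟫ = ⟪lam, y⟫ := by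
        rw [heq] at hkey
        nlinarith
      obtain ⟨u₁, hu₁, u₂, hu₂, hu₁lam, hu₂y, hdecomp⟩ := ih w' hmem hcard' heq'
      have hwrec : w = sI i * w' := by
        rw [hw'def, ← mul_assoc, sI_mul_sI, one_mul]
      rcases mul_eq_zero.1 hct with h0 | h0
      · -- s_i fixes lam
        refine ⟨sI i * u₁, mul_mem (sI_mem i) hu₁, u₂, hu₂, ?_, hu₂y, ?_⟩
        · rw [LinearIsometryEquiv.coe_mul, Function.comp_apply, hu₁lam, hclam h0]
        · rw [hwrec, hdecomp, mul_assoc]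
      · -- s_i fixes w' y, so w y = w' y
        have hfix : sI i (w' y) = w' y := hty h0
        have hwy : w y = u₁ y := by
          have : w y = sI i (w' y) := by
            rw [hwrec, LinearIsometryEquiv.coe_mul, Function.comp_apply]
          rw [this, hfix, hdecomp, LinearIsometryEquiv.coe_mul, Function.comp_apply, hu₂y]
        refine ⟨u₁, hu₁, u₁⁻¹ * w, mul_mem (inv_mem hu₁) hw, hu₁lam, ?_, ?_⟩
        · rw [LinearIsometryEquiv.coe_mul, Function.comp_apply, hwy,
            LinearIsometryEquiv.coe_inv, LinearIsometryEquiv.symm_apply_apply]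
        · rw [← mul_assoc, mul_inv_cancel, one_mul]
    · refine ⟨1, one_mem _, 1, one_mem _, by simp, by simp, ?_⟩
      rw [eq_one_of_not_exists hw hex, mul_one]

/-- Killing-max property for the root system `F₄`. For `λ, y` in the closed
Weyl chamber `{x : x₁ ≥ x₂ + x₃ + x₄, x₂ ≥ x₃ ≥ x₄ ≥ 0}` and `w` in the Weyl group of `F₄`,
`⟪λ, w y⟫ = ⟪λ, y⟫` iff `w = w₁ ∘ w₂` with `w₁, w₂ ∈ W(F₄)`, `w₁ λ = λ` and `w₂ y = y`. -/
theorem stmt_16 (lam y : EuclideanSpace ℝ (Fin 4))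
    (hlam : lam 1 + lam 2 + lam 3 ≤ lam 0 ∧ lam 2 ≤ lam 1 ∧ lam 3 ≤ lam 2 ∧ 0 ≤ lam 3)
    (hy : y 1 + y 2 + y 3 ≤ y 0 ∧ y 2 ≤ y 1 ∧ y 3 ≤ y 2 ∧ 0 ≤ y 3)
    (w : EuclideanSpace ℝ (Fin 4) ≃ₗᵢ[ℝ] EuclideanSpace ℝ (Fin 4)) (hw : w ∈ WF4) :
    ⟪lam, w y⟫ = ⟪lam, y⟫ ↔
      ∃ w₁ ∈ WF4, ∃ w₂ ∈ WF4, w₁ lam = lam ∧ w₂ y = y ∧ w = w₁ * w₂ := by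
  constructor
  · intro heq
    exact main_eq hlam hy (NS w⁻¹).card w hw le_rfl heq
  · rintro ⟨w₁, hw₁, w₂, hw₂, h₁, h₂, rfl⟩
    rw [LinearIsometryEquiv.coe_mul, Function.comp_apply, h₂]
    conv_lhs => rw [← h₁]
    rw [LinearIsometryEquiv.inner_map_map]
end
end

section
/- In ℝ³ with the standard inner product, let s_α be the orthogonal map (x₁, x₂, x₃) ↦ (x₂, x₁, −x₃) and s_β the orthogonal map (x₁, x₂, x₃) ↦ (x₁, x₃, x₂), and let W ≤ O(ℝ³) be the group generated by s_α and s_β (the Weyl group of type G₂ acting on the plane 𝔞 = {(A, B, A−B) : A, B ∈ ℝ}, which both generators preserve). Let λ, y ∈ {(A, B, A−B) : A ≥ B ≥ A−B ≥ 0} (the closed positive Weyl chamber in 𝔞). Then for every w ∈ W, ⟨λ, w y⟩ = ⟨λ, y⟩ if and only if there exist w₁, w₂ ∈ W with w₁ λ = λ, w₂ y = y and w = w₁ ∘ w₂. (This is the Killing-max property for the root system G₂.) -/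
def g2l : List (Matrix (Fin 3) (Fin 3) ℤ) :=
  [!![1,0,0;0,1,0;0,0,1],
   !![0,1,0;1,0,0;0,0,-1],
   !![1,0,0;0,0,1;0,1,0],
   !![0,1,0;0,0,-1;1,0,0],
   !![0,0,1;1,0,0;0,-1,0],
   !![0,0,1;0,-1,0;1,0,0],
   !![0,0,-1;0,1,0;-1,0,0],
   !![0,0,-1;-1,0,0;0,1,0],
   !![0,-1,0;0,0,1;-1,0,0],
   !![0,-1,0;-1,0,0;0,0,1],
   !![-1,0,0;0,0,-1;0,-1,0],
   !![-1,0,0;0,-1,0;0,0,-1]]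

set_option maxRecDepth 8000 in
lemma g2l_mul : ∀ m₁ ∈ g2l, ∀ m₂ ∈ g2l, m₁ * m₂ ∈ g2l := by decide

set_option maxRecDepth 8000 in
lemma g2l_inv : ∀ m ∈ g2l, m.transpose ∈ g2l ∧ m.transpose * m = 1 := by decide

abbrev E3 := EuclideanSpace ℝ (Fin 3)

def WRep (v : E3 ≃ₗᵢ[ℝ] E3) (m : Matrix (Fin 3) (Fin 3) ℤ) : Prop :=
  ∀ (x : E3) (i : Fin 3), v x i = ∑ j, (m i j : ℝ) * x j

lemma WRep.mul {v₁ v₂ : E3 ≃ₗᵢ[ℝ] E3} {m₁ m₂ : Matrix (Fin 3) (Fin 3) ℤ}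
    (h₁ : WRep v₁ m₁) (h₂ : WRep v₂ m₂) : WRep (v₁ * v₂) (m₁ * m₂) := by
  intro x i
  have e := h₂ x
  have hc : (v₁ * v₂) x i = v₁ (v₂ x) i := rfl
  rw [hc, h₁]
  simp only [Fin.sum_univ_three, Matrix.mul_apply] at e ⊢
  rw [e 0, e 1, e 2]
  push_cast
  ring

lemma WRep.one : WRep 1 1 := by
  intro x i
  fin_cases i <;> simp [Fin.sum_univ_three, Matrix.one_apply]

lemma WRep.inv {v : E3 ≃ₗᵢ[ℝ] E3} {m : Matrix (Fin 3) (Fin 3) ℤ}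
    (h : WRep v m) (h1 : m.transpose * m = 1) : WRep v⁻¹ m.transpose := by
  intro x i
  have happ : v (v⁻¹ x) = x := v.apply_symm_apply x
  have hx : ∀ j : Fin 3, x j =
      (m j 0 : ℝ) * (v⁻¹ x) 0 + (m j 1 : ℝ) * (v⁻¹ x) 1 + (m j 2 : ℝ) * (v⁻¹ x) 2 := by
    intro j
    conv_lhs => rw [← happ]
    simpa [Fin.sum_univ_three] using h (v⁻¹ x) j
  have key : ∀ k l : Fin 3, (m 0 k : ℝ) * (m 0 l) + (m 1 k : ℝ) * (m 1 l) + (m 2 k : ℝ) * (m 2 l)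
      = ((1 : Matrix (Fin 3) (Fin 3) ℤ) k l : ℝ) := by
    intro k l
    have h2 : ((m.transpose * m) k l) = ((1 : Matrix (Fin 3) (Fin 3) ℤ) k l) := by rw [h1]
    rw [Matrix.mul_apply] at h2
    simp only [Fin.sum_univ_three, Matrix.transpose_apply] at h2
    exact_mod_cast congrArg (fun n : ℤ => (n : ℝ)) h2
  simp only [Fin.sum_univ_three, Matrix.transpose_apply]
  rw [hx 0, hx 1, hx 2]
  fin_cases i
  · simp only [Fin.mk_zero]
    have e0 := key 0 0; have e1 := key 0 1; have e2 := key 0 2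
    norm_num [Matrix.one_apply, Fin.ext_iff] at e0 e1 e2
    linear_combination (-((v⁻¹ x) 0)) * e0 - ((v⁻¹ x) 1) * e1 - ((v⁻¹ x) 2) * e2
  · simp only [Fin.mk_one]
    have e0 := key 1 0; have e1 := key 1 1; have e2 := key 1 2
    norm_num [Matrix.one_apply, Fin.ext_iff] at e0 e1 e2
    linear_combination (-((v⁻¹ x) 0)) * e0 - ((v⁻¹ x) 1) * e1 - ((v⁻¹ x) 2) * e2
  · simp only [show (⟨2, by norm_num⟩ : Fin 3) = 2 from rfl]
    show v⁻¹ x 2 = _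
    have e0 := key 2 0; have e1 := key 2 1; have e2 := key 2 2
    norm_num [Matrix.one_apply, Fin.ext_iff] at e0 e1 e2
    linear_combination (-((v⁻¹ x) 0)) * e0 - ((v⁻¹ x) 1) * e1 - ((v⁻¹ x) 2) * e2

lemma classify (sa sb : E3 ≃ₗᵢ[ℝ] E3)
    (hsa : ∀ x : E3, (sa x) 0 = x 1 ∧ (sa x) 1 = x 0 ∧ (sa x) 2 = -x 2)
    (hsb : ∀ x : E3, (sb x) 0 = x 0 ∧ (sb x) 1 = x 2 ∧ (sb x) 2 = x 1)
    (w : E3 ≃ₗᵢ[ℝ] E3) (hw : w ∈ Subgroup.closure {sa, sb}) :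
    ∃ m ∈ g2l, WRep w m := by
  induction hw using Subgroup.closure_induction with
  | mem x hx =>
    rcases hx with rfl | rfl
    · refine ⟨!![0,1,0;1,0,0;0,0,-1], by decide, fun x i => ?_⟩
      obtain ⟨h0, h1, h2⟩ := hsa x
      fin_cases i <;>
        simp only [Fin.sum_univ_three] <;>
        norm_num [Matrix.cons_val_zero, Matrix.cons_val_one, Matrix.head_cons,
          Matrix.cons_val_two, Matrix.tail_cons, Matrix.head_fin_const, Matrix.vecHead,
          Matrix.vecTail] <;>
        first
        | exact h0 | exact h1 | exact h2 | (rw [h2]; ring)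
    · refine ⟨!![1,0,0;0,0,1;0,1,0], by decide, fun x i => ?_⟩
      obtain ⟨h0, h1, h2⟩ := hsb x
      fin_cases i <;>
        simp only [Fin.sum_univ_three] <;>
        norm_num [Matrix.cons_val_zero, Matrix.cons_val_one, Matrix.head_cons,
          Matrix.cons_val_two, Matrix.tail_cons, Matrix.head_fin_const, Matrix.vecHead,
          Matrix.vecTail] <;>
        first
        | exact h0 | exact h1 | exact h2
  | one => exact ⟨1, by decide, WRep.one⟩
  | mul x y _ _ hx hy =>
    obtain ⟨m₁, hm₁, hr₁⟩ := hx
    obtain ⟨m₂, hm₂, hr₂⟩ := hy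
    exact ⟨m₁ * m₂, g2l_mul m₁ hm₁ m₂ hm₂, hr₁.mul hr₂⟩
  | inv x _ hx =>
    obtain ⟨m, hm, hr⟩ := hx
    obtain ⟨hmt, h1⟩ := g2l_inv m hm
    exact ⟨m.transpose, hmt, hr.inv h1⟩

open scoped RealInnerProductSpace

set_option maxHeartbeats 2000000 in
/-- Killing-max property for the root system `G₂`. In `ℝ³`, let `sa` be the
orthogonal map `(x₁,x₂,x₃) ↦ (x₂,x₁,−x₃)` and `sb` the orthogonal map
`(x₁,x₂,x₃) ↦ (x₁,x₃,x₂)`, and let `W` be the subgroup of the orthogonal group generated by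
`sa` and `sb` (realizing the Weyl group of `G₂` on the plane `{(A,B,A−B)}`). For `λ, y` in
the closed positive Weyl chamber `{(A,B,A−B) : A ≥ B ≥ A−B ≥ 0}` and any `w ∈ W`,
`⟪λ, w y⟫ = ⟪λ, y⟫` iff `w = w₁ ∘ w₂` with `w₁, w₂ ∈ W`, `w₁ λ = λ` and `w₂ y = y`. -/
theorem stmt_17
    (sa sb : EuclideanSpace ℝ (Fin 3) ≃ₗᵢ[ℝ] EuclideanSpace ℝ (Fin 3))
    (hsa : ∀ x : EuclideanSpace ℝ (Fin 3),
      (sa x) 0 = x 1 ∧ (sa x) 1 = x 0 ∧ (sa x) 2 = -x 2)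
    (hsb : ∀ x : EuclideanSpace ℝ (Fin 3),
      (sb x) 0 = x 0 ∧ (sb x) 1 = x 2 ∧ (sb x) 2 = x 1)
    (lam y : EuclideanSpace ℝ (Fin 3))
    (hlam : ∃ A B : ℝ, B ≤ A ∧ A - B ≤ B ∧ 0 ≤ A - B ∧
      lam 0 = A ∧ lam 1 = B ∧ lam 2 = A - B)
    (hy : ∃ A B : ℝ, B ≤ A ∧ A - B ≤ B ∧ 0 ≤ A - B ∧
      y 0 = A ∧ y 1 = B ∧ y 2 = A - B)
    (w : EuclideanSpace ℝ (Fin 3) ≃ₗᵢ[ℝ] EuclideanSpace ℝ (Fin 3))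
    (hw : w ∈ Subgroup.closure {sa, sb}) :
    ⟪lam, w y⟫ = ⟪lam, y⟫ ↔
      ∃ w₁ ∈ Subgroup.closure {sa, sb}, ∃ w₂ ∈ Subgroup.closure {sa, sb},
        w₁ lam = lam ∧ w₂ y = y ∧ w = w₁ * w₂ := by
  obtain ⟨A, B, hBA, hABB, hAB0, hl0, hl1, hl2⟩ := hlam
  obtain ⟨C, D, hDC, hCDD, hCD0, hy0, hy1, hy2⟩ := hy
  constructor
  · intro heq
    obtain ⟨m, hm, hrep⟩ := classify sa sb hsa hsb w hw
    have hinner : ∀ u v : EuclideanSpace ℝ (Fin 3),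
        ⟪u, v⟫ = u 0 * v 0 + u 1 * v 1 + u 2 * v 2 := by
      intro u v
      simp [PiLp.inner_apply, Fin.sum_univ_three, RCLike.inner_apply]
      ring
    have hmemsa : sa ∈ Subgroup.closure {sa, sb} :=
      Subgroup.subset_closure (by left; rfl)
    have hmemsb : sb ∈ Subgroup.closure {sa, sb} :=
      Subgroup.subset_closure (by right; rfl)
    have weq : ∀ v : E3 ≃ₗᵢ[ℝ] E3, (∀ (x : E3) (i : Fin 3), w x i = v x i) → w = v :=
      fun v h => LinearIsometryEquiv.ext fun x => PiLp.ext (h x)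
    have fixsa : ∀ (u : E3) (P Q : ℝ), u 0 = P → u 1 = Q → u 2 = P - Q → P = Q →
        sa u = u := by
      intro u P Q h0 h1 h2 hPQ
      ext i
      obtain ⟨a0, a1, a2⟩ := hsa u
      fin_cases i
      · show sa u 0 = u 0; rw [a0, h0, h1, hPQ]
      · show sa u 1 = u 1; rw [a1, h0, h1, hPQ]
      · show sa u 2 = u 2; rw [a2, h2, hPQ]; ring
    have fixsb : ∀ (u : E3) (P Q : ℝ), u 0 = P → u 1 = Q → u 2 = P - Q → P - Q = Q →
        sb u = u := by
      intro u P Q h0 h1 h2 hPQ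
      ext i
      obtain ⟨b0, b1, b2⟩ := hsb u
      fin_cases i
      · show sb u 0 = u 0; rw [b0]
      · show sb u 1 = u 1; rw [b1, h2, h1, hPQ]
      · show sb u 2 = u 2; rw [b2, h2, h1, hPQ]
    have lamzero : A - B = 0 → 2 * B - A = 0 →
        ∃ w₁ ∈ Subgroup.closure {sa, sb}, ∃ w₂ ∈ Subgroup.closure {sa, sb},
          w₁ lam = lam ∧ w₂ y = y ∧ w = w₁ * w₂ := by
      intro h1 h2
      have hl : lam = 0 := by
        ext i
        fin_cases i
        · show lam 0 = (0 : ℝ); rw [hl0]; linarith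
        · show lam 1 = (0 : ℝ); rw [hl1]; linarith
        · show lam 2 = (0 : ℝ); rw [hl2]; linarith
      exact ⟨w, hw, 1, Subgroup.one_mem _, by rw [hl]; exact map_zero w, rfl,
        (mul_one w).symm⟩
    have yzero : C - D = 0 → 2 * D - C = 0 →
        ∃ w₁ ∈ Subgroup.closure {sa, sb}, ∃ w₂ ∈ Subgroup.closure {sa, sb},
          w₁ lam = lam ∧ w₂ y = y ∧ w = w₁ * w₂ := by
      intro h1 h2
      have hyz : y = 0 := by
        ext i
        fin_cases i
        · show y 0 = (0 : ℝ); rw [hy0]; linarith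
        · show y 1 = (0 : ℝ); rw [hy1]; linarith
        · show y 2 = (0 : ℝ); rw [hy2]; linarith
      exact ⟨1, Subgroup.one_mem _, w, hw, rfl, by rw [hyz]; exact map_zero w,
        (one_mul w).symm⟩
    have hac : (0:ℝ) ≤ (A-B)*(C-D) := mul_nonneg (by linarith) (by linarith)
    have had : (0:ℝ) ≤ (A-B)*(2*D-C) := mul_nonneg (by linarith) (by linarith)
    have hbc : (0:ℝ) ≤ (2*B-A)*(C-D) := mul_nonneg (by linarith) (by linarith)
    have hbd : (0:ℝ) ≤ (2*B-A)*(2*D-C) := mul_nonneg (by linarith) (by linarith)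
    rw [hinner lam (w y), hinner lam y] at heq
    fin_cases hm
    · -- identity
      have hwv : w = 1 := by
        refine weq 1 (fun x i => ?_)
        have h0 := hrep x 0
        have h1 := hrep x 1
        have h2 := hrep x 2
        simp only [Fin.sum_univ_three] at h0 h1 h2
        norm_num [Matrix.cons_val_zero, Matrix.cons_val_one, Matrix.head_cons, Matrix.cons_val_two, Matrix.tail_cons, Matrix.head_fin_const, Matrix.vecHead, Matrix.vecTail] at h0 h1 h2
        fin_cases i
        · exact h0
        · exact h1
        · exact h2
      exact ⟨w, hw, 1, Subgroup.one_mem _, by rw [hwv]; rfl, rfl, (mul_one w).symm⟩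
    · -- sa
      have e0 := hrep y 0
      have e1 := hrep y 1
      have e2 := hrep y 2
      simp only [Fin.sum_univ_three] at e0 e1 e2
      norm_num [Matrix.cons_val_zero, Matrix.cons_val_one, Matrix.head_cons, Matrix.cons_val_two, Matrix.tail_cons, Matrix.head_fin_const, Matrix.vecHead, Matrix.vecTail] at e0 e1 e2
      simp only [e0, e1, e2, hl0, hl1, hl2, hy0, hy1, hy2] at heq
      have hsum : (3:ℝ)*((A-B)*(C-D)) = 0 := by linear_combination -heq
      have hwv : w = sa := by
        refine weq _ (fun x i => ?_)
        obtain ⟨a0, a1, a2⟩ := hsa x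
        obtain ⟨b0, b1, b2⟩ := hsb x
        obtain ⟨c0, c1, c2⟩ := hsa (sb x)
        obtain ⟨d0, d1, d2⟩ := hsb (sa x)
        have h0 := hrep x 0
        have h1 := hrep x 1
        have h2 := hrep x 2
        simp only [Fin.sum_univ_three] at h0 h1 h2
        norm_num [Matrix.cons_val_zero, Matrix.cons_val_one, Matrix.head_cons, Matrix.cons_val_two, Matrix.tail_cons, Matrix.head_fin_const, Matrix.vecHead, Matrix.vecTail] at h0 h1 h2
        fin_cases i
        · exact h0.trans (a0).symm
        · exact h1.trans (a1).symm
        · exact h2.trans (a2).symm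
      have hz : (A-B)*(C-D) = 0 := by linarith
      rcases mul_eq_zero.mp hz with ha | hc
      · exact ⟨sa, hmemsa, 1, Subgroup.one_mem _,
          fixsa lam A B hl0 hl1 hl2 (by linarith), rfl, by rw [mul_one]; exact hwv⟩
      · exact ⟨1, Subgroup.one_mem _, sa, hmemsa, rfl,
          fixsa y C D hy0 hy1 hy2 (by linarith), by rw [one_mul]; exact hwv⟩
    · -- sb
      have e0 := hrep y 0
      have e1 := hrep y 1
      have e2 := hrep y 2
      simp only [Fin.sum_univ_three] at e0 e1 e2
      norm_num [Matrix.cons_val_zero, Matrix.cons_val_one, Matrix.head_cons, Matrix.cons_val_two, Matrix.tail_cons, Matrix.head_fin_const, Matrix.vecHead, Matrix.vecTail] at e0 e1 e2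
      simp only [e0, e1, e2, hl0, hl1, hl2, hy0, hy1, hy2] at heq
      have hsum : (1:ℝ)*((2*B-A)*(2*D-C)) = 0 := by linear_combination -heq
      have hwv : w = sb := by
        refine weq _ (fun x i => ?_)
        obtain ⟨a0, a1, a2⟩ := hsa x
        obtain ⟨b0, b1, b2⟩ := hsb x
        obtain ⟨c0, c1, c2⟩ := hsa (sb x)
        obtain ⟨d0, d1, d2⟩ := hsb (sa x)
        have h0 := hrep x 0
        have h1 := hrep x 1
        have h2 := hrep x 2
        simp only [Fin.sum_univ_three] at h0 h1 h2
        norm_num [Matrix.cons_val_zero, Matrix.cons_val_one, Matrix.head_cons, Matrix.cons_val_two, Matrix.tail_cons, Matrix.head_fin_const, Matrix.vecHead, Matrix.vecTail] at h0 h1 h2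
        fin_cases i
        · exact h0.trans (b0).symm
        · exact h1.trans (b1).symm
        · exact h2.trans (b2).symm
      have hz : (2*B-A)*(2*D-C) = 0 := by linarith
      rcases mul_eq_zero.mp hz with hb | hd
      · exact ⟨sb, hmemsb, 1, Subgroup.one_mem _,
          fixsb lam A B hl0 hl1 hl2 (by linarith), rfl, by rw [mul_one]; exact hwv⟩
      · exact ⟨1, Subgroup.one_mem _, sb, hmemsb, rfl,
          fixsb y C D hy0 hy1 hy2 (by linarith), by rw [one_mul]; exact hwv⟩
    · -- sb*sa
      have e0 := hrep y 0
      have e1 := hrep y 1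
      have e2 := hrep y 2
      simp only [Fin.sum_univ_three] at e0 e1 e2
      norm_num [Matrix.cons_val_zero, Matrix.cons_val_one, Matrix.head_cons, Matrix.cons_val_two, Matrix.tail_cons, Matrix.head_fin_const, Matrix.vecHead, Matrix.vecTail] at e0 e1 e2
      simp only [e0, e1, e2, hl0, hl1, hl2, hy0, hy1, hy2] at heq
      have hsum : (3:ℝ)*((A-B)*(C-D)) + (3:ℝ)*((2*B-A)*(C-D)) + (1:ℝ)*((2*B-A)*(2*D-C)) = 0 := by linear_combination -heq
      have hwv : w = sb * sa := by
        refine weq _ (fun x i => ?_)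
        obtain ⟨a0, a1, a2⟩ := hsa x
        obtain ⟨b0, b1, b2⟩ := hsb x
        obtain ⟨c0, c1, c2⟩ := hsa (sb x)
        obtain ⟨d0, d1, d2⟩ := hsb (sa x)
        have h0 := hrep x 0
        have h1 := hrep x 1
        have h2 := hrep x 2
        simp only [Fin.sum_univ_three] at h0 h1 h2
        norm_num [Matrix.cons_val_zero, Matrix.cons_val_one, Matrix.head_cons, Matrix.cons_val_two, Matrix.tail_cons, Matrix.head_fin_const, Matrix.vecHead, Matrix.vecTail] at h0 h1 h2
        fin_cases i
        · exact h0.trans (d0.trans a0).symm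
        · exact h1.trans (d1.trans a2).symm
        · exact h2.trans (d2.trans a1).symm
      have hz1 : (A-B)*(C-D) = 0 := by linarith
      have hz2 : (2*B-A)*(C-D) = 0 := by linarith
      have hz3 : (2*B-A)*(2*D-C) = 0 := by linarith
      rcases mul_eq_zero.mp hz2 with hb | hc
      · rcases mul_eq_zero.mp hz1 with ha | hc
        · exact lamzero ha (by linarith)
        · exact ⟨sb, hmemsb, sa, hmemsa, fixsb lam A B hl0 hl1 hl2 (by linarith),
            fixsa y C D hy0 hy1 hy2 (by linarith), hwv⟩
      · rcases mul_eq_zero.mp hz3 with hb | hd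
        · exact ⟨sb, hmemsb, sa, hmemsa, fixsb lam A B hl0 hl1 hl2 (by linarith),
            fixsa y C D hy0 hy1 hy2 (by linarith), hwv⟩
        · exact yzero (by linarith) (by linarith)
    · -- sa*sb
      have e0 := hrep y 0
      have e1 := hrep y 1
      have e2 := hrep y 2
      simp only [Fin.sum_univ_three] at e0 e1 e2
      norm_num [Matrix.cons_val_zero, Matrix.cons_val_one, Matrix.head_cons, Matrix.cons_val_two, Matrix.tail_cons, Matrix.head_fin_const, Matrix.vecHead, Matrix.vecTail] at e0 e1 e2
      simp only [e0, e1, e2, hl0, hl1, hl2, hy0, hy1, hy2] at heq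
      have hsum : (3:ℝ)*((A-B)*(C-D)) + (3:ℝ)*((A-B)*(2*D-C)) + (1:ℝ)*((2*B-A)*(2*D-C)) = 0 := by linear_combination -heq
      have hwv : w = sa * sb := by
        refine weq _ (fun x i => ?_)
        obtain ⟨a0, a1, a2⟩ := hsa x
        obtain ⟨b0, b1, b2⟩ := hsb x
        obtain ⟨c0, c1, c2⟩ := hsa (sb x)
        obtain ⟨d0, d1, d2⟩ := hsb (sa x)
        have h0 := hrep x 0
        have h1 := hrep x 1
        have h2 := hrep x 2
        simp only [Fin.sum_univ_three] at h0 h1 h2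
        norm_num [Matrix.cons_val_zero, Matrix.cons_val_one, Matrix.head_cons, Matrix.cons_val_two, Matrix.tail_cons, Matrix.head_fin_const, Matrix.vecHead, Matrix.vecTail] at h0 h1 h2
        fin_cases i
        · exact h0.trans (c0.trans b1).symm
        · exact h1.trans (c1.trans b0).symm
        · exact h2.trans (c2.trans (congrArg Neg.neg b2)).symm
      have hz1 : (A-B)*(C-D) = 0 := by linarith
      have hz2 : (A-B)*(2*D-C) = 0 := by linarith
      have hz3 : (2*B-A)*(2*D-C) = 0 := by linarith
      rcases mul_eq_zero.mp hz2 with ha | hd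
      · rcases mul_eq_zero.mp hz3 with hb | hd
        · exact lamzero ha (by linarith)
        · exact ⟨sa, hmemsa, sb, hmemsb, fixsa lam A B hl0 hl1 hl2 (by linarith),
            fixsb y C D hy0 hy1 hy2 (by linarith), hwv⟩
      · rcases mul_eq_zero.mp hz1 with ha | hc
        · exact ⟨sa, hmemsa, sb, hmemsb, fixsa lam A B hl0 hl1 hl2 (by linarith),
            fixsb y C D hy0 hy1 hy2 (by linarith), hwv⟩
        · exact yzero (by linarith) (by linarith)
    · -- uniform 5
      have e0 := hrep y 0
      have e1 := hrep y 1
      have e2 := hrep y 2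
      simp only [Fin.sum_univ_three] at e0 e1 e2
      norm_num [Matrix.cons_val_zero, Matrix.cons_val_one, Matrix.head_cons, Matrix.cons_val_two, Matrix.tail_cons, Matrix.head_fin_const, Matrix.vecHead, Matrix.vecTail] at e0 e1 e2
      simp only [e0, e1, e2, hl0, hl1, hl2, hy0, hy1, hy2] at heq
      have hsum : (3:ℝ)*((A-B)*(C-D)) + (3:ℝ)*((A-B)*(2*D-C)) + (3:ℝ)*((2*B-A)*(C-D)) + (3:ℝ)*((2*B-A)*(2*D-C)) = 0 := by linear_combination -heq
      have hz1 : (A-B)*(C-D) = 0 := by linarith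
      have hz2 : (A-B)*(2*D-C) = 0 := by linarith
      have hz3 : (2*B-A)*(C-D) = 0 := by linarith
      have hz4 : (2*B-A)*(2*D-C) = 0 := by linarith
      rcases mul_eq_zero.mp hz1 with ha | hc
      · rcases mul_eq_zero.mp hz4 with hb | hd
        · exact lamzero ha hb
        · rcases mul_eq_zero.mp hz3 with hb | hc
          · exact lamzero ha hb
          · exact yzero hc hd
      · rcases mul_eq_zero.mp hz4 with hb | hd
        · rcases mul_eq_zero.mp hz2 with ha | hd
          · exact lamzero ha hb
          · exact yzero hc hd
        · exact yzero hc hd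
    · -- uniform 6
      have e0 := hrep y 0
      have e1 := hrep y 1
      have e2 := hrep y 2
      simp only [Fin.sum_univ_three] at e0 e1 e2
      norm_num [Matrix.cons_val_zero, Matrix.cons_val_one, Matrix.head_cons, Matrix.cons_val_two, Matrix.tail_cons, Matrix.head_fin_const, Matrix.vecHead, Matrix.vecTail] at e0 e1 e2
      simp only [e0, e1, e2, hl0, hl1, hl2, hy0, hy1, hy2] at heq
      have hsum : (9:ℝ)*((A-B)*(C-D)) + (3:ℝ)*((A-B)*(2*D-C)) + (3:ℝ)*((2*B-A)*(C-D)) + (1:ℝ)*((2*B-A)*(2*D-C)) = 0 := by linear_combination -heq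
      have hz1 : (A-B)*(C-D) = 0 := by linarith
      have hz2 : (A-B)*(2*D-C) = 0 := by linarith
      have hz3 : (2*B-A)*(C-D) = 0 := by linarith
      have hz4 : (2*B-A)*(2*D-C) = 0 := by linarith
      rcases mul_eq_zero.mp hz1 with ha | hc
      · rcases mul_eq_zero.mp hz4 with hb | hd
        · exact lamzero ha hb
        · rcases mul_eq_zero.mp hz3 with hb | hc
          · exact lamzero ha hb
          · exact yzero hc hd
      · rcases mul_eq_zero.mp hz4 with hb | hd
        · rcases mul_eq_zero.mp hz2 with ha | hd
          · exact lamzero ha hb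
          · exact yzero hc hd
        · exact yzero hc hd
    · -- uniform 7
      have e0 := hrep y 0
      have e1 := hrep y 1
      have e2 := hrep y 2
      simp only [Fin.sum_univ_three] at e0 e1 e2
      norm_num [Matrix.cons_val_zero, Matrix.cons_val_one, Matrix.head_cons, Matrix.cons_val_two, Matrix.tail_cons, Matrix.head_fin_const, Matrix.vecHead, Matrix.vecTail] at e0 e1 e2
      simp only [e0, e1, e2, hl0, hl1, hl2, hy0, hy1, hy2] at heq
      have hsum : (9:ℝ)*((A-B)*(C-D)) + (3:ℝ)*((A-B)*(2*D-C)) + (6:ℝ)*((2*B-A)*(C-D)) + (3:ℝ)*((2*B-A)*(2*D-C)) = 0 := by linear_combination -heq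
      have hz1 : (A-B)*(C-D) = 0 := by linarith
      have hz2 : (A-B)*(2*D-C) = 0 := by linarith
      have hz3 : (2*B-A)*(C-D) = 0 := by linarith
      have hz4 : (2*B-A)*(2*D-C) = 0 := by linarith
      rcases mul_eq_zero.mp hz1 with ha | hc
      · rcases mul_eq_zero.mp hz4 with hb | hd
        · exact lamzero ha hb
        · rcases mul_eq_zero.mp hz3 with hb | hc
          · exact lamzero ha hb
          · exact yzero hc hd
      · rcases mul_eq_zero.mp hz4 with hb | hd
        · rcases mul_eq_zero.mp hz2 with ha | hd
          · exact lamzero ha hb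
          · exact yzero hc hd
        · exact yzero hc hd
    · -- uniform 8
      have e0 := hrep y 0
      have e1 := hrep y 1
      have e2 := hrep y 2
      simp only [Fin.sum_univ_three] at e0 e1 e2
      norm_num [Matrix.cons_val_zero, Matrix.cons_val_one, Matrix.head_cons, Matrix.cons_val_two, Matrix.tail_cons, Matrix.head_fin_const, Matrix.vecHead, Matrix.vecTail] at e0 e1 e2
      simp only [e0, e1, e2, hl0, hl1, hl2, hy0, hy1, hy2] at heq
      have hsum : (9:ℝ)*((A-B)*(C-D)) + (6:ℝ)*((A-B)*(2*D-C)) + (3:ℝ)*((2*B-A)*(C-D)) + (3:ℝ)*((2*B-A)*(2*D-C)) = 0 := by linear_combination -heq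
      have hz1 : (A-B)*(C-D) = 0 := by linarith
      have hz2 : (A-B)*(2*D-C) = 0 := by linarith
      have hz3 : (2*B-A)*(C-D) = 0 := by linarith
      have hz4 : (2*B-A)*(2*D-C) = 0 := by linarith
      rcases mul_eq_zero.mp hz1 with ha | hc
      · rcases mul_eq_zero.mp hz4 with hb | hd
        · exact lamzero ha hb
        · rcases mul_eq_zero.mp hz3 with hb | hc
          · exact lamzero ha hb
          · exact yzero hc hd
      · rcases mul_eq_zero.mp hz4 with hb | hd
        · rcases mul_eq_zero.mp hz2 with ha | hd
          · exact lamzero ha hb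
          · exact yzero hc hd
        · exact yzero hc hd
    · -- uniform 9
      have e0 := hrep y 0
      have e1 := hrep y 1
      have e2 := hrep y 2
      simp only [Fin.sum_univ_three] at e0 e1 e2
      norm_num [Matrix.cons_val_zero, Matrix.cons_val_one, Matrix.head_cons, Matrix.cons_val_two, Matrix.tail_cons, Matrix.head_fin_const, Matrix.vecHead, Matrix.vecTail] at e0 e1 e2
      simp only [e0, e1, e2, hl0, hl1, hl2, hy0, hy1, hy2] at heq
      have hsum : (9:ℝ)*((A-B)*(C-D)) + (6:ℝ)*((A-B)*(2*D-C)) + (6:ℝ)*((2*B-A)*(C-D)) + (4:ℝ)*((2*B-A)*(2*D-C)) = 0 := by linear_combination -heq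
      have hz1 : (A-B)*(C-D) = 0 := by linarith
      have hz2 : (A-B)*(2*D-C) = 0 := by linarith
      have hz3 : (2*B-A)*(C-D) = 0 := by linarith
      have hz4 : (2*B-A)*(2*D-C) = 0 := by linarith
      rcases mul_eq_zero.mp hz1 with ha | hc
      · rcases mul_eq_zero.mp hz4 with hb | hd
        · exact lamzero ha hb
        · rcases mul_eq_zero.mp hz3 with hb | hc
          · exact lamzero ha hb
          · exact yzero hc hd
      · rcases mul_eq_zero.mp hz4 with hb | hd
        · rcases mul_eq_zero.mp hz2 with ha | hd
          · exact lamzero ha hb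
          · exact yzero hc hd
        · exact yzero hc hd
    · -- uniform 10
      have e0 := hrep y 0
      have e1 := hrep y 1
      have e2 := hrep y 2
      simp only [Fin.sum_univ_three] at e0 e1 e2
      norm_num [Matrix.cons_val_zero, Matrix.cons_val_one, Matrix.head_cons, Matrix.cons_val_two, Matrix.tail_cons, Matrix.head_fin_const, Matrix.vecHead, Matrix.vecTail] at e0 e1 e2
      simp only [e0, e1, e2, hl0, hl1, hl2, hy0, hy1, hy2] at heq
      have hsum : (12:ℝ)*((A-B)*(C-D)) + (6:ℝ)*((A-B)*(2*D-C)) + (6:ℝ)*((2*B-A)*(C-D)) + (3:ℝ)*((2*B-A)*(2*D-C)) = 0 := by linear_combination -heq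
      have hz1 : (A-B)*(C-D) = 0 := by linarith
      have hz2 : (A-B)*(2*D-C) = 0 := by linarith
      have hz3 : (2*B-A)*(C-D) = 0 := by linarith
      have hz4 : (2*B-A)*(2*D-C) = 0 := by linarith
      rcases mul_eq_zero.mp hz1 with ha | hc
      · rcases mul_eq_zero.mp hz4 with hb | hd
        · exact lamzero ha hb
        · rcases mul_eq_zero.mp hz3 with hb | hc
          · exact lamzero ha hb
          · exact yzero hc hd
      · rcases mul_eq_zero.mp hz4 with hb | hd
        · rcases mul_eq_zero.mp hz2 with ha | hd
          · exact lamzero ha hb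
          · exact yzero hc hd
        · exact yzero hc hd
    · -- uniform 11
      have e0 := hrep y 0
      have e1 := hrep y 1
      have e2 := hrep y 2
      simp only [Fin.sum_univ_three] at e0 e1 e2
      norm_num [Matrix.cons_val_zero, Matrix.cons_val_one, Matrix.head_cons, Matrix.cons_val_two, Matrix.tail_cons, Matrix.head_fin_const, Matrix.vecHead, Matrix.vecTail] at e0 e1 e2
      simp only [e0, e1, e2, hl0, hl1, hl2, hy0, hy1, hy2] at heq
      have hsum : (12:ℝ)*((A-B)*(C-D)) + (6:ℝ)*((A-B)*(2*D-C)) + (6:ℝ)*((2*B-A)*(C-D)) + (4:ℝ)*((2*B-A)*(2*D-C)) = 0 := by linear_combination -heq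
      have hz1 : (A-B)*(C-D) = 0 := by linarith
      have hz2 : (A-B)*(2*D-C) = 0 := by linarith
      have hz3 : (2*B-A)*(C-D) = 0 := by linarith
      have hz4 : (2*B-A)*(2*D-C) = 0 := by linarith
      rcases mul_eq_zero.mp hz1 with ha | hc
      · rcases mul_eq_zero.mp hz4 with hb | hd
        · exact lamzero ha hb
        · rcases mul_eq_zero.mp hz3 with hb | hc
          · exact lamzero ha hb
          · exact yzero hc hd
      · rcases mul_eq_zero.mp hz4 with hb | hd
        · rcases mul_eq_zero.mp hz2 with ha | hd
          · exact lamzero ha hb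
          · exact yzero hc hd
        · exact yzero hc hd
  · rintro ⟨w₁, _, w₂, _, hf1, hf2, rfl⟩
    have h1 : (w₁ * w₂) y = w₁ y := by show w₁ (w₂ y) = w₁ y; rw [hf2]
    rw [h1]
    conv_lhs => rw [← hf1]
    exact w₁.inner_map_map lam y
end
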